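/- arXiv:2506.08689 — 3 statements merged into one kernel-verified Lean document; each statement's English description precedes it below -/
import Mathlib

section
/- Consider the stochastic dynamical system x_{t+1} = f(x_t, ω_t) with x_0 ∼ P_{x_0}, ω_t ∼ P_ω i.i.d., where f : X × W → X (X ⊆ ℝ^d, W ⊆ ℝ^q) is measurable and piecewise Lipschitz, and let P_{x_t} denote the true state distribution at time t. Define the approximation scheme: P̂_{x_0} := P_{x_0}; for each t ≥ 0, P̂_t := P̂_{x_t} × P_ω, and P̂_{x_{t+1}} := f#Δ_{R_t,C_t}#P̂_t, where R_t is a measurable partition of X × W in N_t regions and C_t = {c_{t,1},…,c_{t,N_t}} ⊂ X × W are locations such that θ_{d,t} := ( Σ_{k=1}^{N_t} ∫_{R_{t,k}} ‖x − c_{t,k}‖^ρ dP̂_t(x) )^{1/ρ} ≤ ε for a given ε > 0 and all t ≥ 0. Let α_{0,k}, β_{0,k} ≥ 0 satisfy ‖f(x) − f(c_{0,k})‖^ρ ≤ α_{0,k}‖x − c_{0,k}‖^ρ + β_{0,k} for all x ∈ R_{0,k}, and for t ≥ 1 let α_{t,k}, β_{t,k} ≥ 0 satisfy the same inequality for all x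 ∈ X × W, with α_{max,t} := max_k α_{t,k}. Define θ_1 := ( Σ_{k=1}^{N_0} α_{0,k} ∫_{R_{0,k}} ‖x − c_{0,k}‖^ρ dP̂_0(x) + Σ_{k=1}^{N_0} P̂_0(R_{0,k}) β_{0,k} )^{1/ρ} and, for t ≥ 1, θ_{t+1} := ( α_{max,t} (θ_t + ε)^ρ + Σ_{k=1}^{N_t} P̂_t(R_{t,k}) β_{t,k} )^{1/ρ}. Then for every t > 0, W_ρ(P_{x_t}, P̂_{x_t}) ≤ θ_t. -/
open MeasureTheory ENNReal

noncomputable section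

/-- `ℝ^d` with the Euclidean norm. -/
abbrev Euc (d : ℕ) : Type := EuclideanSpace ℝ (Fin d)

/-- The set of couplings `Γ(μ, ν)` of two measures: probability measures on the product
whose first marginal is `μ` and second marginal is `ν`. -/
def Couplings {β : Type*} [MeasurableSpace β] (μ ν : Measure β) :
    Set (Measure (β × β)) :=
  {γ | IsProbabilityMeasure γ ∧ γ.map Prod.fst = μ ∧ γ.map Prod.snd = ν}

/-- The ρ-Wasserstein distance
`W_ρ(μ, ν) = (inf_{γ ∈ Γ(μ,ν)} ∫ ‖x - y‖^ρ dγ(x,y))^{1/ρ}`. -/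
noncomputable def Wass {β : Type*} [MeasurableSpace β] [NormedAddCommGroup β]
    (ρ : ℝ) (μ ν : Measure β) : ℝ :=
  ((⨅ γ ∈ Couplings μ ν, ∫⁻ p, ENNReal.ofReal (‖p.1 - p.2‖ ^ ρ) ∂γ).toReal) ^ (1/ρ)

/-- `μ` has finite ρ-th moment: `∫ ‖x‖^ρ dμ(x) < ∞`. -/
def HasFiniteMoment {β : Type*} [MeasurableSpace β] [NormedAddCommGroup β]
    (ρ : ℝ) (μ : Measure β) : Prop :=
  ∫⁻ x, ENNReal.ofReal (‖x‖ ^ ρ) ∂μ < ⊤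

/-- A measurable partition of a set `X` into `N` regions. -/
def IsMeasPartition {β : Type*} [MeasurableSpace β] {N : ℕ}
    (R : Fin N → Set β) (X : Set β) : Prop :=
  (∀ i, MeasurableSet (R i)) ∧ (⋃ i, R i) = X ∧ ∀ i j, i ≠ j → R i ∩ R j = ∅

/-- The quantization operator `Δ_{R,C}(x) = Σ_i c_i 1_{R_i}(x)`. -/
noncomputable def quantMap {β : Type*} [AddCommMonoid β] {N : ℕ}
    (R : Fin N → Set β) (c : Fin N → β) (x : β) : β :=
  ∑ i, (R i).indicator (fun _ => c i) x

lemma quantMap_eq_of_mem {β : Type*} [AddCommMonoid β] {N : ℕ} {R : Fin N → Set β} {c : Fin N → β}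
    (hdisj : ∀ i j, i ≠ j → R i ∩ R j = ∅) {k : Fin N} {x : β} (hx : x ∈ R k) :
    quantMap R c x = c k := by
  unfold quantMap
  rw [Finset.sum_eq_single_of_mem k (Finset.mem_univ k)]
  · exact Set.indicator_of_mem hx _
  · intro i _ hik
    apply Set.indicator_of_notMem
    intro hxi
    exact Set.eq_empty_iff_forall_notMem.mp (hdisj i k hik) x ⟨hxi, hx⟩

lemma measurable_quantMap {β : Type*} [MeasurableSpace β] [AddCommMonoid β] [MeasurableAdd₂ β]
    {N : ℕ} {R : Fin N → Set β} {c : Fin N → β} (hR : ∀ i, MeasurableSet (R i)) :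
    Measurable (quantMap R c) := by
  unfold quantMap
  exact Finset.measurable_sum _ (fun i _ => (measurable_const).indicator (hR i))

lemma lintegral_eq_sum_partition {β : Type*} [MeasurableSpace β] {N : ℕ} {R : Fin N → Set β}
    (hpart : IsMeasPartition R Set.univ) (μ : Measure β) (g : β → ℝ≥0∞) :
    ∫⁻ x, g x ∂μ = ∑ k, ∫⁻ x in R k, g x ∂μ := by
  have hdisj : Pairwise (Function.onFun Disjoint R) := fun i j hij =>
    Set.disjoint_iff_inter_eq_empty.mpr (hpart.2.2 i j hij)
  rw [← setLIntegral_univ, ← hpart.2.1, lintegral_iUnion hpart.1 hdisj, tsum_fintype]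

lemma IsMeasPartition.preimage {β γ : Type*} [MeasurableSpace β] [MeasurableSpace γ]
    {N : ℕ} {R : Fin N → Set β} (h : IsMeasPartition R Set.univ) {g : γ → β}
    (hg : Measurable g) : IsMeasPartition (fun k => g ⁻¹' R k) Set.univ := by
  refine ⟨fun i => hg (h.1 i), ?_, fun i j hij => ?_⟩
  · rw [← Set.preimage_iUnion, h.2.1, Set.preimage_univ]
  · rw [← Set.preimage_inter, h.2.2 i j hij, Set.preimage_empty]

lemma rpow_sub_le {ρ : ℝ} (hρ : 1 ≤ ρ) (x c : ℝ) (hx : 0 ≤ x) (hc : 0 ≤ c) :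
    (x + c) ^ ρ ≤ 2 ^ ρ * (x ^ ρ + c ^ ρ) := by
  have hρ0 : (0:ℝ) ≤ ρ := le_trans zero_le_one hρ
  have h1 : x + c ≤ 2 * max x c := by
    rcases max_cases x c with ⟨hm, h⟩ | ⟨hm, h⟩ <;> rw [hm] <;> nlinarith
  calc (x + c) ^ ρ ≤ (2 * max x c) ^ ρ :=
        Real.rpow_le_rpow (by positivity) h1 hρ0
    _ = 2 ^ ρ * (max x c) ^ ρ := Real.mul_rpow (by norm_num) (le_max_of_le_left hx)
    _ ≤ 2 ^ ρ * (x ^ ρ + c ^ ρ) := by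
        gcongr 2 ^ ρ * ?_
        rcases max_cases x c with ⟨hm, _⟩ | ⟨hm, _⟩ <;> rw [hm] <;>
          [exact le_add_of_nonneg_right (Real.rpow_nonneg hc ρ);
           exact le_add_of_nonneg_left (Real.rpow_nonneg hx ρ)]

lemma lintegral_moment_shift {β : Type*} [NormedAddCommGroup β] [MeasurableSpace β]
    {ρ : ℝ} (hρ : 1 ≤ ρ) {μ : Measure β} [IsFiniteMeasure μ]
    (hμ : ∫⁻ x, ENNReal.ofReal (‖x‖ ^ ρ) ∂μ < ⊤) (c : β) :
    ∫⁻ x, ENNReal.ofReal (‖x - c‖ ^ ρ) ∂μ < ⊤ := by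
  have hρ0 : (0:ℝ) ≤ ρ := le_trans zero_le_one hρ
  have hb : ∀ x : β, ENNReal.ofReal (‖x - c‖ ^ ρ) ≤
      ENNReal.ofReal (2 ^ ρ) * (ENNReal.ofReal (‖x‖ ^ ρ) + ENNReal.ofReal (‖c‖ ^ ρ)) := by
    intro x
    rw [← ENNReal.ofReal_add (by positivity) (by positivity),
      ← ENNReal.ofReal_mul (by positivity)]
    apply ENNReal.ofReal_le_ofReal
    calc ‖x - c‖ ^ ρ ≤ (‖x‖ + ‖c‖) ^ ρ :=
          Real.rpow_le_rpow (norm_nonneg _) (norm_sub_le x c) hρ0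
      _ ≤ 2 ^ ρ * (‖x‖ ^ ρ + ‖c‖ ^ ρ) := rpow_sub_le hρ _ _ (norm_nonneg _) (norm_nonneg _)
  calc ∫⁻ x, ENNReal.ofReal (‖x - c‖ ^ ρ) ∂μ
      ≤ ∫⁻ x, ENNReal.ofReal (2 ^ ρ) * (ENNReal.ofReal (‖x‖ ^ ρ) + ENNReal.ofReal (‖c‖ ^ ρ)) ∂μ :=
        lintegral_mono hb
    _ = ENNReal.ofReal (2 ^ ρ) * (∫⁻ x, ENNReal.ofReal (‖x‖ ^ ρ) + ENNReal.ofReal (‖c‖ ^ ρ) ∂μ) :=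
        lintegral_const_mul' _ _ ENNReal.ofReal_ne_top
    _ < ⊤ := by
        rw [lintegral_add_right' _ aemeasurable_const, lintegral_const]
        exact ENNReal.mul_lt_top ENNReal.ofReal_lt_top
          (ENNReal.add_lt_top.mpr ⟨hμ, ENNReal.mul_lt_top ENNReal.ofReal_lt_top
            (measure_lt_top μ _)⟩)

lemma integrable_rpow_sub_const {β : Type*} [NormedAddCommGroup β] [MeasurableSpace β]
    [OpensMeasurableSpace β]
    {ρ : ℝ} (hρ : 1 ≤ ρ) {μ : Measure β} [IsFiniteMeasure μ]
    (hμ : ∫⁻ x, ENNReal.ofReal (‖x‖ ^ ρ) ∂μ < ⊤) (c : β) :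
    Integrable (fun x => ‖x - c‖ ^ ρ) μ := by
  have hρ0 : (0:ℝ) ≤ ρ := le_trans zero_le_one hρ
  have hm : Measurable (fun x : β => ‖x - c‖ ^ ρ) :=
    (((Real.continuous_rpow_const hρ0).comp
      ((continuous_id.sub continuous_const).norm))).measurable
  refine ⟨hm.aestronglyMeasurable, ?_⟩
  rw [hasFiniteIntegral_iff_ofReal (Filter.Eventually.of_forall fun x => by positivity)]
  exact lintegral_moment_shift hρ hμ c

lemma setLIntegral_ofReal_affine {β : Type*} [MeasurableSpace β] {μ : Measure β} {s : Set β}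
    {h : β → ℝ} (hh : ∀ z, 0 ≤ h z) {a b : ℝ} (ha : 0 ≤ a) (hb : 0 ≤ b) :
    ∫⁻ z in s, ENNReal.ofReal (a * h z + b) ∂μ
      = ENNReal.ofReal a * ∫⁻ z in s, ENNReal.ofReal (h z) ∂μ + ENNReal.ofReal b * μ s := by
  simp_rw [ENNReal.ofReal_add (mul_nonneg ha (hh _)) hb, ENNReal.ofReal_mul ha]
  rw [lintegral_add_right' _ aemeasurable_const,
    lintegral_const_mul' _ _ ENNReal.ofReal_ne_top, setLIntegral_const]

/-- Theorem: approximation error dynamics, part i. For the stochastic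
system `x_{t+1} = f(x_t, ω_t)` with true state distributions `P_{x_t}` and the discrete
approximation scheme `P̂_{x_{t+1}} = f#Δ_{R_t,C_t}#(P̂_{x_t} × P_ω)` with per-step
quantization errors `θ_{d,t} ≤ ε`, the recursively defined error bounds `θ_t` satisfy
`W_ρ(P_{x_t}, P̂_{x_t}) ≤ θ_t` for all `t > 0`. -/
theorem stmt9 {d q : ℕ} (ρ : ℝ) (hρ : 1 ≤ ρ) (ε : ℝ) (hε : 0 < ε)
    -- the dynamics: measurable and piecewise Lipschitz
    (f : Euc d × Euc q → Euc d) (hf : Measurable f)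
    (hpw : ∃ (M : ℕ) (S : Fin M → Set (Euc d × Euc q)) (L : NNReal),
      (⋃ i, S i) = Set.univ ∧ ∀ i, LipschitzOnWith L f (S i))
    -- initial and noise distributions
    (Px0 : Measure (Euc d)) (hPx0 : IsProbabilityMeasure Px0)
    (Pω : Measure (Euc q)) (hPω : IsProbabilityMeasure Pω)
    -- the true state distributions: `P_{x_{t+1}} = f#(P_{x_t} × P_ω)`
    (Px : ℕ → Measure (Euc d))
    (hPx0' : Px 0 = Px0)
    (hPxsucc : ∀ t, Px (t + 1) = ((Px t).prod Pω).map f)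
    -- partitions and locations on the joint state-noise space
    (N : ℕ → ℕ)
    (R : (t : ℕ) → Fin (N t) → Set (Euc d × Euc q))
    (c : (t : ℕ) → Fin (N t) → Euc d × Euc q)
    (hR : ∀ t, IsMeasPartition (R t) Set.univ)
    -- the approximating state distributions: `P̂_{x_0} = P_{x_0}`,
    -- `P̂_{x_{t+1}} = f#Δ_{R_t,C_t}#(P̂_{x_t} × P_ω)`
    (Phat : ℕ → Measure (Euc d))
    (hPhat0 : Phat 0 = Px0)
    (hPhatsucc : ∀ t,
      Phat (t + 1) = (((Phat t).prod Pω).map (quantMap (R t) (c t))).map f)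
    -- all measures involved have finite ρ-th moments
    (hmomPx : ∀ t, HasFiniteMoment ρ (Px t))
    (hmomPhat : ∀ t, HasFiniteMoment ρ (Phat t))
    (hmomJoint : ∀ t, HasFiniteMoment ρ ((Phat t).prod Pω))
    (hmomω : HasFiniteMoment ρ Pω)
    -- the quantization errors satisfy `θ_{d,t} ≤ ε`
    (hθd : ∀ t,
      (∑ k, ∫ z in R t k, ‖z - c t k‖ ^ ρ ∂((Phat t).prod Pω)) ^ (1/ρ) ≤ ε)
    -- linearization coefficients: local at `t = 0`, global for `t ≥ 1`
    (α β : (t : ℕ) → Fin (N t) → ℝ)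
    (hα : ∀ t k, 0 ≤ α t k) (hβ : ∀ t k, 0 ≤ β t k)
    (hlin0 : ∀ k, ∀ z ∈ R 0 k,
      ‖f z - f (c 0 k)‖ ^ ρ ≤ α 0 k * ‖z - c 0 k‖ ^ ρ + β 0 k)
    (hlin : ∀ t, 1 ≤ t → ∀ k, ∀ z : Euc d × Euc q,
      ‖f z - f (c t k)‖ ^ ρ ≤ α t k * ‖z - c t k‖ ^ ρ + β t k)
    (αmax : ℕ → ℝ) (hαmax : ∀ t, IsGreatest (Set.range (α t)) (αmax t))
    -- the recursive error bounds
    (θ : ℕ → ℝ)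
    (hθ1 : θ 1 = (∑ k, α 0 k * ∫ z in R 0 k, ‖z - c 0 k‖ ^ ρ ∂((Phat 0).prod Pω) +
      ∑ k, (((Phat 0).prod Pω) (R 0 k)).toReal * β 0 k) ^ (1/ρ))
    (hθsucc : ∀ t, 1 ≤ t → θ (t + 1) = (αmax t * (θ t + ε) ^ ρ +
      ∑ k, (((Phat t).prod Pω) (R t k)).toReal * β t k) ^ (1/ρ)) :
    ∀ t, 0 < t → Wass ρ (Px t) (Phat t) ≤ θ t := by
  clear hpw hmomPx hmomPhat hmomω
  have hρ0 : (0:ℝ) < ρ := lt_of_lt_of_le one_pos hρ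
  have hρ0' : (0:ℝ) ≤ ρ := hρ0.le
  have hρne : ρ ≠ 0 := ne_of_gt hρ0
  have hinv : (0:ℝ) ≤ 1/ρ := by positivity
  -- probability measures
  have hPxP : ∀ t, IsProbabilityMeasure (Px t) := by
    intro t; induction t with
    | zero => rw [hPx0']; exact hPx0
    | succ n ih =>
      rw [hPxsucc]
      haveI := ih
      exact Measure.isProbabilityMeasure_map hf.aemeasurable
  have hQm : ∀ t, Measurable (quantMap (R t) (c t)) := fun t => measurable_quantMap (hR t).1
  have hPhatP : ∀ t, IsProbabilityMeasure (Phat t) := by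
    intro t; induction t with
    | zero => rw [hPhat0]; exact hPx0
    | succ n ih =>
      rw [hPhatsucc]
      haveI := ih
      haveI : IsProbabilityMeasure (((Phat n).prod Pω).map (quantMap (R n) (c n))) :=
        Measure.isProbabilityMeasure_map (hQm n).aemeasurable
      exact Measure.isProbabilityMeasure_map hf.aemeasurable
  -- measurability of cost integrands
  have hcm : Measurable fun p : Euc d × Euc d => ENNReal.ofReal (‖p.1 - p.2‖ ^ ρ) :=
    (ENNReal.continuous_ofReal.comp ((Real.continuous_rpow_const hρ0').comp
      ((continuous_fst.sub continuous_snd).norm))).measurable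
  haveI : OpensMeasurableSpace ((Euc d × Euc q) × (Euc d × Euc q)) :=
    Prod.opensMeasurableSpace
  have hcmE : Measurable fun p : (Euc d × Euc q) × (Euc d × Euc q) =>
      ENNReal.ofReal (‖p.1 - p.2‖ ^ ρ) :=
    (ENNReal.continuous_ofReal.comp ((Real.continuous_rpow_const hρ0').comp
      ((continuous_fst.sub continuous_snd).norm))).measurable
  have hrm : Measurable fun x : ℝ => ENNReal.ofReal (x ^ ρ) :=
    (ENNReal.continuous_ofReal.comp (Real.continuous_rpow_const hρ0')).measurable
  -- quantization error bound in ENNReal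
  have hquant : ∀ t, ∫⁻ z, ENNReal.ofReal (‖z - quantMap (R t) (c t) z‖ ^ ρ)
      ∂((Phat t).prod Pω) ≤ ENNReal.ofReal (ε ^ ρ) := by
    intro t
    haveI := hPhatP t
    rw [lintegral_eq_sum_partition (hR t) ((Phat t).prod Pω)
      (fun z => ENNReal.ofReal (‖z - quantMap (R t) (c t) z‖ ^ ρ))]
    have hint : ∀ k, Integrable (fun z => ‖z - c t k‖ ^ ρ) ((Phat t).prod Pω) :=
      fun k => integrable_rpow_sub_const hρ (hmomJoint t) _
    have hkk : ∀ k, ∫⁻ z in R t k, ENNReal.ofReal (‖z - quantMap (R t) (c t) z‖ ^ ρ)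
        ∂((Phat t).prod Pω)
        = ENNReal.ofReal (∫ z in R t k, ‖z - c t k‖ ^ ρ ∂((Phat t).prod Pω)) := by
      intro k
      rw [setLIntegral_congr_fun ((hR t).1 k) (fun z hz => by
        rw [quantMap_eq_of_mem (hR t).2.2 hz])]
      exact (ofReal_integral_eq_lintegral_ofReal ((hint k).restrict)
        (Filter.Eventually.of_forall fun z => by positivity)).symm
    simp_rw [hkk]
    have hnn : ∀ k ∈ Finset.univ, (0:ℝ) ≤ ∫ z in R t k, ‖z - c t k‖ ^ ρ ∂((Phat t).prod Pω) :=
      fun k _ => setIntegral_nonneg ((hR t).1 k) (fun z _ => by positivity)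
    rw [← ENNReal.ofReal_sum_of_nonneg hnn]
    apply ENNReal.ofReal_le_ofReal
    have hS : 0 ≤ ∑ k, ∫ z in R t k, ‖z - c t k‖ ^ ρ ∂((Phat t).prod Pω) :=
      Finset.sum_nonneg hnn
    calc ∑ k, ∫ z in R t k, ‖z - c t k‖ ^ ρ ∂((Phat t).prod Pω)
        = ((∑ k, ∫ z in R t k, ‖z - c t k‖ ^ ρ ∂((Phat t).prod Pω)) ^ (1/ρ)) ^ ρ := by
          rw [← Real.rpow_mul hS, one_div_mul_cancel hρne, Real.rpow_one]
      _ ≤ ε ^ ρ := Real.rpow_le_rpow (Real.rpow_nonneg hS _) (hθd t) hρ0'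
  -- the key induction
  have key : ∀ t, 1 ≤ t → 0 ≤ θ t ∧ ∃ γ, γ ∈ Couplings (Px t) (Phat t) ∧
      (∫⁻ p, ENNReal.ofReal (‖p.1 - p.2‖ ^ ρ) ∂γ) ≤ ENNReal.ofReal (θ t ^ ρ) := by
    intro t ht
    induction t, ht using Nat.le_induction with
    | base =>
      haveI := hPhatP 0
      set m0 := (Phat 0).prod Pω with hm0
      set Q0 := quantMap (R 0) (c 0) with hQ0
      set g0 : Euc d × Euc q → Euc d × Euc d := fun z => (f z, f (Q0 z)) with hg0
      have hg0m : Measurable g0 := hf.prodMk (hf.comp (hQm 0))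
      -- the θ 1 base quantity
      set b1 := ∑ k, α 0 k * ∫ z in R 0 k, ‖z - c 0 k‖ ^ ρ ∂((Phat 0).prod Pω) +
        ∑ k, (((Phat 0).prod Pω) (R 0 k)).toReal * β 0 k with hb1
      have hnn1 : ∀ k ∈ (Finset.univ : Finset (Fin (N 0))),
          (0:ℝ) ≤ α 0 k * ∫ z in R 0 k, ‖z - c 0 k‖ ^ ρ ∂((Phat 0).prod Pω) :=
        fun k _ => mul_nonneg (hα 0 k)
          (setIntegral_nonneg ((hR 0).1 k) (fun z _ => by positivity))
      have hnn2 : ∀ k ∈ (Finset.univ : Finset (Fin (N 0))),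
          (0:ℝ) ≤ (((Phat 0).prod Pω) (R 0 k)).toReal * β 0 k :=
        fun k _ => mul_nonneg ENNReal.toReal_nonneg (hβ 0 k)
      have hbnn : 0 ≤ b1 := add_nonneg (Finset.sum_nonneg hnn1) (Finset.sum_nonneg hnn2)
      have hθ1nn : 0 ≤ θ 1 := hθ1 ▸ Real.rpow_nonneg hbnn _
      have hθ1ρ : θ 1 ^ ρ = b1 := by
        rw [hθ1, ← Real.rpow_mul hbnn, one_div_mul_cancel hρne, Real.rpow_one]
      refine ⟨hθ1nn, m0.map g0, ⟨?_, ?_, ?_⟩, ?_⟩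
      · exact Measure.isProbabilityMeasure_map hg0m.aemeasurable
      · rw [Measure.map_map measurable_fst hg0m]
        have : (Prod.fst ∘ g0) = f := rfl
        rw [this, hPxsucc 0, hPx0', ← hPhat0]
      · rw [Measure.map_map measurable_snd hg0m]
        have : (Prod.snd ∘ g0) = f ∘ Q0 := rfl
        rw [this, ← Measure.map_map hf (hQm 0), hPhatsucc 0]
      · rw [lintegral_map hcm hg0m]
        beta_reduce
        have hstep : ∫⁻ z, ENNReal.ofReal (‖(g0 z).1 - (g0 z).2‖ ^ ρ) ∂m0 =
            ∫⁻ z, ENNReal.ofReal (‖f z - f (Q0 z)‖ ^ ρ) ∂m0 := rfl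
        rw [hstep, lintegral_eq_sum_partition (hR 0) m0 _]
        have hbd : ∀ k, ∫⁻ z in R 0 k, ENNReal.ofReal (‖f z - f (Q0 z)‖ ^ ρ) ∂m0 ≤
            ENNReal.ofReal (α 0 k * ∫ z in R 0 k, ‖z - c 0 k‖ ^ ρ ∂m0) +
            ENNReal.ofReal ((m0 (R 0 k)).toReal * β 0 k) := by
          intro k
          have h1 : ∫⁻ z in R 0 k, ENNReal.ofReal (‖f z - f (Q0 z)‖ ^ ρ) ∂m0 ≤
              ∫⁻ z in R 0 k, ENNReal.ofReal (α 0 k * ‖z - c 0 k‖ ^ ρ + β 0 k) ∂m0 := by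
            apply setLIntegral_mono'
            · exact (hR 0).1 k
            · intro z hz
              apply ENNReal.ofReal_le_ofReal
              have hc : Q0 z = c 0 k := quantMap_eq_of_mem (hR 0).2.2 hz
              rw [hc]
              exact hlin0 k z hz
          refine le_trans h1 ?_
          rw [setLIntegral_ofReal_affine (fun z => by positivity) (hα 0 k) (hβ 0 k)]
          have hI : ∫⁻ z in R 0 k, ENNReal.ofReal (‖z - c 0 k‖ ^ ρ) ∂m0
              = ENNReal.ofReal (∫ z in R 0 k, ‖z - c 0 k‖ ^ ρ ∂m0) :=
            (ofReal_integral_eq_lintegral_ofReal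
              ((integrable_rpow_sub_const hρ (hmomJoint 0) _).restrict)
              (Filter.Eventually.of_forall fun z => by positivity)).symm
          rw [hI, ← ENNReal.ofReal_mul (hα 0 k)]
          have hm : ENNReal.ofReal (β 0 k) * m0 (R 0 k)
              = ENNReal.ofReal ((m0 (R 0 k)).toReal * β 0 k) := by
            rw [ENNReal.ofReal_mul ENNReal.toReal_nonneg,
              ENNReal.ofReal_toReal (measure_ne_top _ _), mul_comm]
          rw [hm]
        calc ∑ k, ∫⁻ z in R 0 k, ENNReal.ofReal (‖f z - f (Q0 z)‖ ^ ρ) ∂m0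
            ≤ ∑ k, (ENNReal.ofReal (α 0 k * ∫ z in R 0 k, ‖z - c 0 k‖ ^ ρ ∂m0) +
              ENNReal.ofReal ((m0 (R 0 k)).toReal * β 0 k)) := Finset.sum_le_sum fun k _ => hbd k
          _ = ENNReal.ofReal (θ 1 ^ ρ) := by
              rw [hθ1ρ, hb1, Finset.sum_add_distrib,
                ENNReal.ofReal_add (Finset.sum_nonneg hnn1) (Finset.sum_nonneg hnn2),
                ENNReal.ofReal_sum_of_nonneg hnn1, ENNReal.ofReal_sum_of_nonneg hnn2]
    | succ n hn ih =>
      obtain ⟨hθn, γ, ⟨hγP, hγ1, hγ2⟩, hcost⟩ := ih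
      haveI := hγP
      haveI := hPhatP n
      haveI := hPxP n
      set Q := quantMap (R n) (c n) with hQdef
      set e : (Euc d × Euc d) × Euc q → (Euc d × Euc q) × (Euc d × Euc q) :=
        fun p => ((p.1.1, p.2), (p.1.2, p.2)) with he
      have hem : Measurable e :=
        ((measurable_fst.comp measurable_fst).prodMk measurable_snd).prodMk
          ((measurable_snd.comp measurable_fst).prodMk measurable_snd)
      set γ' := (γ.prod Pω).map e with hγ'
      haveI : IsProbabilityMeasure γ' := Measure.isProbabilityMeasure_map hem.aemeasurable
      have hγ'fst : γ'.map Prod.fst = (Px n).prod Pω := by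
        rw [hγ', Measure.map_map measurable_fst hem]
        have h1 : (Prod.fst ∘ e) = Prod.map (Prod.fst : Euc d × Euc d → Euc d) (id : Euc q → Euc q) := rfl
        rw [h1, ← Measure.map_prod_map γ Pω measurable_fst measurable_id, hγ1, Measure.map_id]
      have hγ'snd : γ'.map Prod.snd = (Phat n).prod Pω := by
        rw [hγ', Measure.map_map measurable_snd hem]
        have h1 : (Prod.snd ∘ e) = Prod.map (Prod.snd : Euc d × Euc d → Euc d) (id : Euc q → Euc q) := rfl
        rw [h1, ← Measure.map_prod_map γ Pω measurable_snd measurable_id, hγ2, Measure.map_id]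
      set g : (Euc d × Euc q) × (Euc d × Euc q) → Euc d × Euc d :=
        fun pr => (f pr.1, f (Q pr.2)) with hg
      have hgm : Measurable g :=
        (hf.comp measurable_fst).prodMk (hf.comp ((hQm n).comp measurable_snd))
      -- nonnegativity of θ (n+1)
      have hαm : 0 ≤ αmax n := by
        obtain ⟨k, hk⟩ := (hαmax n).1
        exact hk ▸ hα n k
      have hnn2 : ∀ k ∈ (Finset.univ : Finset (Fin (N n))),
          (0:ℝ) ≤ (((Phat n).prod Pω) (R n k)).toReal * β n k :=
        fun k _ => mul_nonneg ENNReal.toReal_nonneg (hβ n k)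
      set b2 := αmax n * (θ n + ε) ^ ρ + ∑ k, (((Phat n).prod Pω) (R n k)).toReal * β n k
        with hb2
      have hbnn : 0 ≤ b2 :=
        add_nonneg (mul_nonneg hαm (Real.rpow_nonneg (by linarith) _)) (Finset.sum_nonneg hnn2)
      have hθsn : 0 ≤ θ (n+1) := (hθsucc n hn) ▸ Real.rpow_nonneg hbnn _
      have hθsρ : θ (n+1) ^ ρ = b2 := by
        rw [hθsucc n hn, ← Real.rpow_mul hbnn, one_div_mul_cancel hρne, Real.rpow_one]
      -- the Minkowski bound on D
      have hg2m : Measurable fun z : Euc d × Euc q => ENNReal.ofReal (‖z - Q z‖ ^ ρ) :=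
        hrm.comp (measurable_id.sub (hQm n)).norm
      set D := ∫⁻ pr, ENNReal.ofReal (‖pr.1 - Q pr.2‖ ^ ρ) ∂γ' with hD
      have hg1meas : Measurable fun pr : (Euc d × Euc q) × (Euc d × Euc q) =>
          ENNReal.ofReal ‖pr.1 - pr.2‖ :=
        (ENNReal.continuous_ofReal.comp (continuous_fst.sub continuous_snd).norm).measurable
      have hg2meas : Measurable fun pr : (Euc d × Euc q) × (Euc d × Euc q) =>
          ENNReal.ofReal ‖pr.2 - Q pr.2‖ :=
        (measurable_snd.sub ((hQm n).comp measurable_snd)).norm.ennreal_ofReal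
      have hDbound : D ≤ ENNReal.ofReal ((θ n + ε) ^ ρ) := by
        have hD1 : D ≤ ∫⁻ pr,
            (ENNReal.ofReal ‖pr.1 - pr.2‖ + ENNReal.ofReal ‖pr.2 - Q pr.2‖) ^ ρ ∂γ' := by
          rw [hD]
          apply lintegral_mono
          intro pr
          beta_reduce
          rw [← ENNReal.ofReal_rpow_of_nonneg (norm_nonneg _) hρ0']
          refine ENNReal.rpow_le_rpow ?_ hρ0'
          rw [← ENNReal.ofReal_add (norm_nonneg _) (norm_nonneg _)]
          apply ENNReal.ofReal_le_ofReal
          simpa [dist_eq_norm] using dist_triangle pr.1 pr.2 (Q pr.2)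
        have hmink := ENNReal.lintegral_Lp_add_le (μ := γ') hg1meas.aemeasurable
          hg2meas.aemeasurable hρ
        have h1 : ∫⁻ pr : (Euc d × Euc q) × (Euc d × Euc q),
            ENNReal.ofReal ‖pr.1 - pr.2‖ ^ ρ ∂γ' ≤ ENNReal.ofReal (θ n ^ ρ) := by
          have heq : (fun pr : (Euc d × Euc q) × (Euc d × Euc q) =>
              ENNReal.ofReal ‖pr.1 - pr.2‖ ^ ρ)
              = fun pr => ENNReal.ofReal (‖pr.1 - pr.2‖ ^ ρ) := by
            funext pr
            exact ENNReal.ofReal_rpow_of_nonneg (norm_nonneg _) hρ0'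
          rw [heq, hγ', lintegral_map hcmE hem]
          beta_reduce
          have heq2 : (fun p : (Euc d × Euc d) × Euc q =>
              ENNReal.ofReal (‖(e p).1 - (e p).2‖ ^ ρ))
              = fun p => ENNReal.ofReal (‖p.1.1 - p.1.2‖ ^ ρ) := by
            funext p
            congr 2
            have hsub : (e p).1 - (e p).2 = (p.1.1 - p.1.2, (0 : Euc q)) := by
              rw [he]
              ext <;> simp
            rw [hsub, Prod.norm_def]
            simp
          rw [heq2]
          have h3 : ∫⁻ p : (Euc d × Euc d) × Euc q,
              ENNReal.ofReal (‖p.1.1 - p.1.2‖ ^ ρ) ∂(γ.prod Pω)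
              = ∫⁻ p, ENNReal.ofReal (‖p.1 - p.2‖ ^ ρ) ∂γ := by
            rw [← lintegral_map hcm measurable_fst, Measure.map_fst_prod, measure_univ,
              one_smul]
          rw [h3]
          exact hcost
        have h2 : ∫⁻ pr : (Euc d × Euc q) × (Euc d × Euc q),
            ENNReal.ofReal ‖pr.2 - Q pr.2‖ ^ ρ ∂γ' ≤ ENNReal.ofReal (ε ^ ρ) := by
          have heq : (fun pr : (Euc d × Euc q) × (Euc d × Euc q) =>
              ENNReal.ofReal ‖pr.2 - Q pr.2‖ ^ ρ)
              = fun pr => ENNReal.ofReal (‖pr.2 - Q pr.2‖ ^ ρ) := by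
            funext pr
            exact ENNReal.ofReal_rpow_of_nonneg (norm_nonneg _) hρ0'
          rw [heq, ← lintegral_map hg2m measurable_snd, hγ'snd]
          exact hquant n
        have hround : ∀ (x : ℝ), 0 ≤ x →
            (ENNReal.ofReal (x ^ ρ)) ^ (1/ρ) = ENNReal.ofReal x := by
          intro x hx
          rw [← ENNReal.ofReal_rpow_of_nonneg hx hρ0', ← ENNReal.rpow_mul,
            mul_one_div_cancel hρne, ENNReal.rpow_one]
        have hDroot : D ^ (1/ρ) ≤ ENNReal.ofReal (θ n) + ENNReal.ofReal ε := by
          calc D ^ (1/ρ) ≤ (∫⁻ pr,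
                (ENNReal.ofReal ‖pr.1 - pr.2‖ + ENNReal.ofReal ‖pr.2 - Q pr.2‖) ^ ρ ∂γ')
                ^ (1/ρ) := ENNReal.rpow_le_rpow hD1 hinv
            _ ≤ (∫⁻ pr : (Euc d × Euc q) × (Euc d × Euc q),
                  ENNReal.ofReal ‖pr.1 - pr.2‖ ^ ρ ∂γ') ^ (1/ρ) +
                (∫⁻ pr : (Euc d × Euc q) × (Euc d × Euc q),
                  ENNReal.ofReal ‖pr.2 - Q pr.2‖ ^ ρ ∂γ') ^ (1/ρ) := hmink
            _ ≤ (ENNReal.ofReal (θ n ^ ρ)) ^ (1/ρ) + (ENNReal.ofReal (ε ^ ρ)) ^ (1/ρ) :=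
                add_le_add (ENNReal.rpow_le_rpow h1 hinv) (ENNReal.rpow_le_rpow h2 hinv)
            _ = ENNReal.ofReal (θ n) + ENNReal.ofReal ε := by
                rw [hround _ hθn, hround _ hε.le]
        calc D = (D ^ (1/ρ)) ^ ρ := by
              rw [← ENNReal.rpow_mul, one_div_mul_cancel hρne, ENNReal.rpow_one]
          _ ≤ (ENNReal.ofReal (θ n) + ENNReal.ofReal ε) ^ ρ :=
              ENNReal.rpow_le_rpow hDroot hρ0'
          _ = ENNReal.ofReal ((θ n + ε) ^ ρ) := by
              rw [← ENNReal.ofReal_add hθn hε.le,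
                ENNReal.ofReal_rpow_of_nonneg (by linarith) hρ0']
      -- construct the new coupling
      refine ⟨hθsn, γ'.map g, ⟨?_, ?_, ?_⟩, ?_⟩
      · exact Measure.isProbabilityMeasure_map hgm.aemeasurable
      · rw [Measure.map_map measurable_fst hgm]
        have h1 : (Prod.fst ∘ g) = f ∘ Prod.fst := rfl
        rw [h1, ← Measure.map_map hf measurable_fst, hγ'fst, ← hPxsucc n]
      · rw [Measure.map_map measurable_snd hgm]
        have h1 : (Prod.snd ∘ g) = f ∘ (Q ∘ Prod.snd) := rfl
        rw [h1, ← Measure.map_map hf ((hQm n).comp measurable_snd),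
          ← Measure.map_map (hQm n) measurable_snd, hγ'snd, ← hPhatsucc n]
      · rw [lintegral_map hcm hgm]
        beta_reduce
        have hstep : (fun pr => ENNReal.ofReal (‖(g pr).1 - (g pr).2‖ ^ ρ)) =
            fun pr : (Euc d × Euc q) × (Euc d × Euc q) =>
              ENNReal.ofReal (‖f pr.1 - f (Q pr.2)‖ ^ ρ) := rfl
        rw [hstep, lintegral_eq_sum_partition ((hR n).preimage measurable_snd) γ' _]
        have hγ'app : ∀ k, γ' (Prod.snd ⁻¹' R n k) = ((Phat n).prod Pω) (R n k) := by
          intro k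
          rw [← hγ'snd, Measure.map_apply measurable_snd ((hR n).1 k)]
        have hbd : ∀ k, ∫⁻ pr in Prod.snd ⁻¹' R n k,
            ENNReal.ofReal (‖f pr.1 - f (Q pr.2)‖ ^ ρ) ∂γ' ≤
            ENNReal.ofReal (αmax n) *
              (∫⁻ pr in Prod.snd ⁻¹' R n k, ENNReal.ofReal (‖pr.1 - Q pr.2‖ ^ ρ) ∂γ') +
            ENNReal.ofReal (β n k) * γ' (Prod.snd ⁻¹' R n k) := by
          intro k
          have h1 : ∫⁻ pr in Prod.snd ⁻¹' R n k,
              ENNReal.ofReal (‖f pr.1 - f (Q pr.2)‖ ^ ρ) ∂γ' ≤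
              ∫⁻ pr in Prod.snd ⁻¹' R n k,
              ENNReal.ofReal (αmax n * ‖pr.1 - Q pr.2‖ ^ ρ + β n k) ∂γ' := by
            apply setLIntegral_mono' (measurable_snd ((hR n).1 k))
            intro pr hpr
            apply ENNReal.ofReal_le_ofReal
            have hc : Q pr.2 = c n k := quantMap_eq_of_mem (hR n).2.2 hpr
            rw [hc]
            calc ‖f pr.1 - f (c n k)‖ ^ ρ ≤ α n k * ‖pr.1 - c n k‖ ^ ρ + β n k :=
                  hlin n hn k pr.1
              _ ≤ αmax n * ‖pr.1 - c n k‖ ^ ρ + β n k :=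
                  add_le_add_left (mul_le_mul_of_nonneg_right
                    ((hαmax n).2 (Set.mem_range_self k))
                    (Real.rpow_nonneg (norm_nonneg _) _)) _
          refine le_trans h1 ?_
          rw [setLIntegral_ofReal_affine (fun pr => by positivity) hαm (hβ n k)]
        calc ∑ k, ∫⁻ pr in Prod.snd ⁻¹' R n k,
              ENNReal.ofReal (‖f pr.1 - f (Q pr.2)‖ ^ ρ) ∂γ'
            ≤ ∑ k, (ENNReal.ofReal (αmax n) *
                (∫⁻ pr in Prod.snd ⁻¹' R n k, ENNReal.ofReal (‖pr.1 - Q pr.2‖ ^ ρ) ∂γ') +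
              ENNReal.ofReal (β n k) * γ' (Prod.snd ⁻¹' R n k)) :=
              Finset.sum_le_sum fun k _ => hbd k
          _ = ENNReal.ofReal (αmax n) * D +
              ∑ k, ENNReal.ofReal (β n k) * γ' (Prod.snd ⁻¹' R n k) := by
              rw [Finset.sum_add_distrib, ← Finset.mul_sum, hD,
                lintegral_eq_sum_partition ((hR n).preimage measurable_snd) γ'
                  (fun pr => ENNReal.ofReal (‖pr.1 - Q pr.2‖ ^ ρ))]
          _ ≤ ENNReal.ofReal (αmax n) * ENNReal.ofReal ((θ n + ε) ^ ρ) +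
              ∑ k, ENNReal.ofReal (β n k) * γ' (Prod.snd ⁻¹' R n k) := by
              gcongr
          _ = ENNReal.ofReal (θ (n+1) ^ ρ) := by
              have hsum : ∑ k, ENNReal.ofReal (β n k) * γ' (Prod.snd ⁻¹' R n k) =
                  ENNReal.ofReal (∑ k, (((Phat n).prod Pω) (R n k)).toReal * β n k) := by
                rw [ENNReal.ofReal_sum_of_nonneg hnn2]
                congr 1
                ext k
                rw [hγ'app k, ENNReal.ofReal_mul ENNReal.toReal_nonneg,
                  ENNReal.ofReal_toReal (measure_ne_top _ _), mul_comm]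
              rw [hsum, ← ENNReal.ofReal_mul hαm,
                ← ENNReal.ofReal_add (mul_nonneg hαm (Real.rpow_nonneg (by linarith) _))
                  (Finset.sum_nonneg hnn2), hθsρ]
  -- conclude
  intro t ht
  obtain ⟨hθt, γ, hγmem, hcost⟩ := key t ht
  have h1 : (⨅ γ ∈ Couplings (Px t) (Phat t),
      ∫⁻ p, ENNReal.ofReal (‖p.1 - p.2‖ ^ ρ) ∂γ) ≤ ENNReal.ofReal (θ t ^ ρ) :=
    le_trans (iInf₂_le γ hγmem) hcost
  unfold Wass
  calc ((⨅ γ ∈ Couplings (Px t) (Phat t),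
        ∫⁻ p, ENNReal.ofReal (‖p.1 - p.2‖ ^ ρ) ∂γ).toReal) ^ (1/ρ)
      ≤ (θ t ^ ρ) ^ (1/ρ) :=
        Real.rpow_le_rpow ENNReal.toReal_nonneg
          (ENNReal.toReal_le_of_le_ofReal (Real.rpow_nonneg hθt ρ) h1) hinv
    _ = θ t := by
        rw [← Real.rpow_mul hθt, mul_one_div_cancel hρne, Real.rpow_one]
end
end

section
/- Let X ⊆ ℝ^d, ρ ≥ 1, P a Borel probability measure on X with finite ρ-th moment, R = {R_1,…,R_N} a measurable partition of X, C = {c_1,…,c_N} ⊂ X a set of locations, and f : X → Y ⊆ ℝ^q measurable with all relevant pushforwards having finite ρ-th moments. Let π_j := P(R_j) and θ_d := ( Σ_{k=1}^N ∫_{R_k} ‖x − c_k‖^ρ dP(x) )^{1/ρ}. Then for any θ ≥ 0, sup_{Q ∈ B_θ(P)} W_ρ(f#Q, f#Δ_{R,C}#P) ≤ ( inf_{λ ≥ 0} { λ (θ + θ_d)^ρ + Σ_{j=1}^N π_j sup_{ξ ∈ X} ( ‖f(ξ) − f(c_j)‖^ρ − λ ‖ξ − c_j‖^ρ ) } )^{1/ρ}.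 -/
open MeasureTheory ENNReal NNReal

noncomputable section

variable {α : Type*} [MeasurableSpace α]

lemma ofReal_norm_rpow {β : Type*} [NormedAddCommGroup β] {ρ : ℝ} (hρ : 0 ≤ ρ) (v : β) :
    ENNReal.ofReal (‖v‖ ^ ρ) = (‖v‖₊ : ℝ≥0∞) ^ ρ := by
  rw [← enorm_eq_nnnorm, ← ofReal_norm_eq_enorm, ← ENNReal.ofReal_rpow_of_nonneg (norm_nonneg v) hρ]

lemma rpow_inv_rpow' {ρ : ℝ} (hρ : ρ ≠ 0) (x : ℝ≥0∞) : (x ^ (1/ρ)) ^ ρ = x := by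
  rw [← ENNReal.rpow_mul, one_div_mul_cancel hρ, ENNReal.rpow_one]

lemma mink {μ : Measure α} {ρ : ℝ} (hρ : 1 ≤ ρ)
    {F G : α → ℝ≥0∞} (hF : AEMeasurable F μ) (hG : AEMeasurable G μ) {A B : ℝ≥0∞}
    (hA : (∫⁻ a, F a ^ ρ ∂μ) ^ (1/ρ) ≤ A) (hB : (∫⁻ a, G a ^ ρ ∂μ) ^ (1/ρ) ≤ B) :
    ∫⁻ a, (F a + G a) ^ ρ ∂μ ≤ (A + B) ^ ρ := by
  have h := ENNReal.lintegral_Lp_add_le hF hG hρ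
  simp only [Pi.add_apply] at h
  calc ∫⁻ a, (F a + G a) ^ ρ ∂μ
      = ((∫⁻ a, (F a + G a) ^ ρ ∂μ) ^ (1/ρ)) ^ ρ := (rpow_inv_rpow' (by linarith) _).symm
    _ ≤ (A + B) ^ ρ :=
      ENNReal.rpow_le_rpow (h.trans (add_le_add hA hB)) (by linarith)

lemma mink_ne_top {μ : Measure α} {ρ : ℝ} (hρ : 1 ≤ ρ)
    {F G : α → ℝ≥0∞} (hF : AEMeasurable F μ) (hG : AEMeasurable G μ)
    (hFt : ∫⁻ a, F a ^ ρ ∂μ ≠ ⊤) (hGt : ∫⁻ a, G a ^ ρ ∂μ ≠ ⊤) :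
    ∫⁻ a, (F a + G a) ^ ρ ∂μ ≠ ⊤ := by
  have h := mink hρ hF hG (le_refl _) (le_refl _)
  refine ne_top_of_le_ne_top ?_ h
  have h1 : (∫⁻ a, F a ^ ρ ∂μ) ^ (1/ρ) ≠ ⊤ :=
    (ENNReal.rpow_lt_top_of_nonneg (by positivity) hFt).ne
  have h2 : (∫⁻ a, G a ^ ρ ∂μ) ^ (1/ρ) ≠ ⊤ :=
    (ENNReal.rpow_lt_top_of_nonneg (by positivity) hGt).ne
  exact (ENNReal.rpow_lt_top_of_nonneg (by linarith)
    (ENNReal.add_ne_top.mpr ⟨h1, h2⟩)).ne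

lemma shifted_moment {μ : Measure α} [IsFiniteMeasure μ] {β : Type*} [NormedAddCommGroup β] [MeasurableSpace β] [OpensMeasurableSpace β]
    {g : α → β} (hg : Measurable g) {ρ : ℝ} (hρ : 1 ≤ ρ)
    (hm : ∫⁻ x, (‖g x‖₊ : ℝ≥0∞) ^ ρ ∂μ ≠ ⊤) (a : β) :
    ∫⁻ x, (‖g x - a‖₊ : ℝ≥0∞) ^ ρ ∂μ ≠ ⊤ := by
  have hmono : ∫⁻ x, (‖g x - a‖₊ : ℝ≥0∞) ^ ρ ∂μ
      ≤ ∫⁻ x, ((‖g x‖₊ : ℝ≥0∞) + (‖a‖₊ : ℝ≥0∞)) ^ ρ ∂μ := by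
    refine lintegral_mono fun x => ENNReal.rpow_le_rpow ?_ (by linarith)
    calc ((‖g x - a‖₊ : ℝ≥0∞)) ≤ ((‖g x‖₊ + ‖a‖₊ : ℝ≥0) : ℝ≥0∞) := by
          exact_mod_cast nnnorm_sub_le _ _
      _ = (‖g x‖₊ : ℝ≥0∞) + (‖a‖₊ : ℝ≥0∞) := ENNReal.coe_add _ _
  refine ne_top_of_le_ne_top ?_ hmono
  refine mink_ne_top hρ hg.enorm.aemeasurable aemeasurable_const hm ?_
  simp only [lintegral_const]
  exact (ENNReal.mul_lt_top
    (ENNReal.rpow_lt_top_of_nonneg (by linarith) ENNReal.coe_ne_top)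
    (measure_lt_top μ _)).ne

/-- Proposition: dual bound. With `π_j = P(R_j)` and
`θ_d = (Σ_k ∫_{R_k} ‖x − c_k‖^ρ dP)^{1/ρ}`, for every `Q ∈ B_θ(P)`,
`W_ρ(f#Q, f#Δ_{R,C}#P) ≤ (inf_{λ ≥ 0} { λ (θ + θ_d)^ρ +
  Σ_j π_j sup_{ξ ∈ X} (‖f(ξ) − f(c_j)‖^ρ − λ ‖ξ − c_j‖^ρ) })^{1/ρ}`.
The infimum over `λ` and the inner suprema are rendered by quantifying over all
`λ ≥ 0` and all upper bounds `s j` of the inner expressions. -/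
theorem stmt13 {d q N : ℕ} (ρ : ℝ) (hρ : 1 ≤ ρ) (θ : ℝ) (hθ : 0 ≤ θ)
    (X : Set (Euc d)) (hXm : MeasurableSet X) (Y : Set (Euc q))
    (P : Measure (Euc d)) (hP : IsProbabilityMeasure P) (hPX : P X = 1)
    (hPm : HasFiniteMoment ρ P)
    (R : Fin N → Set (Euc d)) (hR : IsMeasPartition R X)
    (c : Fin N → Euc d) (hc : ∀ k, c k ∈ X)
    (f : Euc d → Euc q) (hf : Measurable f) (hfXY : Set.MapsTo f X Y)
    (hfΔm : HasFiniteMoment ρ ((P.map (quantMap R c)).map f))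
    (θd : ℝ) (hθd : θd = (∑ k, ∫ x in R k, ‖x - c k‖ ^ ρ ∂P) ^ (1/ρ)) :
    ∀ Q : Measure (Euc d), IsProbabilityMeasure Q → Q X = 1 → HasFiniteMoment ρ Q →
      Wass ρ P Q ≤ θ → HasFiniteMoment ρ (Q.map f) →
      ∀ lam : ℝ, 0 ≤ lam → ∀ s : Fin N → ℝ,
        (∀ j, ∀ ξ ∈ X, ‖f ξ - f (c j)‖ ^ ρ - lam * ‖ξ - c j‖ ^ ρ ≤ s j) →
        Wass ρ (Q.map f) ((P.map (quantMap R c)).map f) ≤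
          (lam * (θ + θd) ^ ρ + ∑ j, (P (R j)).toReal * s j) ^ (1/ρ) := by
  intro Q hQ hQX hQm hWθ hQfm lam hlam s hs
  haveI := hP; haveI := hQ
  obtain ⟨hRm, hRX, hRd⟩ := hR
  have hρ0 : (0:ℝ) < ρ := lt_of_lt_of_le one_pos hρ
  have hρne : ρ ≠ 0 := hρ0.ne'
  have hiρ0 : (0:ℝ) ≤ 1/ρ := by positivity
  set Δ : Euc d → Euc d := quantMap R c with hΔdef
  have hΔmeas : Measurable Δ :=
    Finset.measurable_sum _ fun i _ => measurable_const.indicator (hRm i)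
  have hΔeq : ∀ j, ∀ x ∈ R j, Δ x = c j := by
    intro j x hx
    simp only [hΔdef, quantMap]
    rw [Finset.sum_eq_single j]
    · exact Set.indicator_of_mem hx _
    · intro i _ hij
      refine Set.indicator_of_notMem (fun hxi => ?_) _
      have h := hRd i j hij
      exact absurd (Set.mem_inter hxi hx) (by rw [h]; exact Set.notMem_empty x)
    · intro h; exact absurd (Finset.mem_univ j) h
  -- rewriting costs
  have hcost : ∀ (m : ℕ) (γ : Measure (Euc m × Euc m)),
      ∫⁻ p, ENNReal.ofReal (‖p.1 - p.2‖ ^ ρ) ∂γ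
        = ∫⁻ p, ((‖p.1 - p.2‖₊ : ℝ≥0∞)) ^ ρ ∂γ :=
    fun m γ => lintegral_congr fun p => ofReal_norm_rpow hρ0.le _
  have hcostm : ∀ (m : ℕ), Measurable (fun p : Euc m × Euc m => ((‖p.1 - p.2‖₊ : ℝ≥0∞)) ^ ρ) :=
    fun m => ENNReal.continuous_rpow_const.measurable.comp
      (measurable_fst.sub measurable_snd).enorm
  -- moments in ennnorm form
  have hPm' : ∫⁻ x, ((‖x‖₊ : ℝ≥0∞)) ^ ρ ∂P ≠ ⊤ := by
    have := hPm
    rw [HasFiniteMoment, lintegral_congr fun x => ofReal_norm_rpow hρ0.le x] at this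
    exact this.ne
  have hQm' : ∫⁻ x, ((‖x‖₊ : ℝ≥0∞)) ^ ρ ∂Q ≠ ⊤ := by
    have := hQm
    rw [HasFiniteMoment, lintegral_congr fun x => ofReal_norm_rpow hρ0.le x] at this
    exact this.ne
  -- nonnegativity of s
  have hs0 : ∀ j, 0 ≤ s j := by
    intro j
    have := hs j (c j) (hc j)
    simpa [Real.zero_rpow hρne] using this
  -- the L_k and θd facts
  set L : Fin N → ℝ≥0∞ := fun k => ∫⁻ x in R k, ((‖x - c k‖₊ : ℝ≥0∞)) ^ ρ ∂P with hLdef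
  have hLne : ∀ k, L k ≠ ⊤ := by
    intro k
    refine ne_top_of_le_ne_top (shifted_moment measurable_id hρ hPm' (c k)) ?_
    exact setLIntegral_le_lintegral _ _
  have hLsum_ne : ∑ k, L k ≠ ⊤ := by
    refine (ENNReal.sum_lt_top.mpr fun k _ => (hLne k).lt_top).ne
  have hBochner : ∀ k, ∫ x in R k, ‖x - c k‖ ^ ρ ∂P = (L k).toReal := by
    intro k
    have hcontk : Continuous fun x : Euc d => ‖x - c k‖ ^ ρ :=
      (Real.continuous_rpow_const hρ0.le).comp ((continuous_id.sub continuous_const).norm)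
    rw [integral_eq_lintegral_of_nonneg_ae
      (ae_of_all _ fun x => Real.rpow_nonneg (norm_nonneg _) ρ)
      hcontk.aestronglyMeasurable]
    congr 1
    exact lintegral_congr fun x => ofReal_norm_rpow hρ0.le _
  have hθd0 : 0 ≤ θd := by
    rw [hθd]
    refine Real.rpow_nonneg ?_ _
    exact Finset.sum_nonneg fun k _ => by rw [hBochner]; exact ENNReal.toReal_nonneg
  have hofReal_θd : ENNReal.ofReal θd = (∑ k, L k) ^ (1/ρ) := by
    rw [hθd]
    have h1 : (∑ k, ∫ x in R k, ‖x - c k‖ ^ ρ ∂P) = (∑ k, L k).toReal := by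
      rw [ENNReal.toReal_sum fun k _ => hLne k]
      exact Finset.sum_congr rfl fun k _ => hBochner k
    rw [h1, ← ENNReal.ofReal_rpow_of_nonneg ENNReal.toReal_nonneg hiρ0,
      ENNReal.ofReal_toReal hLsum_ne]
  -- ∫⁻ ‖y - Δ y‖^ρ over P equals ∑ L k
  have hGint : ∫⁻ y, ((‖y - Δ y‖₊ : ℝ≥0∞)) ^ ρ ∂P = ∑ k, L k := by
    have hPae : ∀ᵐ y ∂P, y ∈ X := by
      rw [ae_iff]
      have : {y | ¬ y ∈ X} = Xᶜ := rfl
      rw [this, measure_compl hXm (measure_ne_top P X), hPX]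
      simp
    conv_lhs => rw [← Measure.restrict_eq_self_of_ae_mem hPae]
    rw [← hRX, lintegral_iUnion hRm
      (fun i j hij => Set.disjoint_iff_inter_eq_empty.mpr (hRd i j hij)), tsum_fintype]
    refine Finset.sum_congr rfl fun k _ => ?_
    refine setLIntegral_congr_fun (hRm k) (fun y hy => ?_)
    rw [hΔeq k y hy]
  -- the infimum for (P, Q) is bounded
  set KPQ : Measure (Euc d × Euc d) → ℝ≥0∞ :=
    fun γ => ∫⁻ p, ((‖p.1 - p.2‖₊ : ℝ≥0∞)) ^ ρ ∂γ with hKPQ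
  have hprod_mem : P.prod Q ∈ Couplings P Q := by
    refine ⟨by infer_instance, ?_, ?_⟩
    · rw [Measure.map_fst_prod]; simp
    · rw [Measure.map_snd_prod]; simp
  have hprod_ne : KPQ (P.prod Q) ≠ ⊤ := by
    have hmono : KPQ (P.prod Q) ≤
        ∫⁻ p, ((‖p.1‖₊ : ℝ≥0∞) + (‖p.2‖₊ : ℝ≥0∞)) ^ ρ ∂(P.prod Q) := by
      refine lintegral_mono fun p => ENNReal.rpow_le_rpow ?_ hρ0.le
      calc ((‖p.1 - p.2‖₊ : ℝ≥0∞)) ≤ ((‖p.1‖₊ + ‖p.2‖₊ : ℝ≥0) : ℝ≥0∞) := by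
            exact_mod_cast nnnorm_sub_le _ _
        _ = (‖p.1‖₊ : ℝ≥0∞) + (‖p.2‖₊ : ℝ≥0∞) := ENNReal.coe_add _ _
    refine ne_top_of_le_ne_top ?_ hmono
    have hm1 : Measurable fun p : Euc d × Euc d => ((‖p.1‖₊ : ℝ≥0∞)) := measurable_fst.enorm
    have hm2 : Measurable fun p : Euc d × Euc d => ((‖p.2‖₊ : ℝ≥0∞)) := measurable_snd.enorm
    have hnormme : Measurable fun x : Euc d => ((‖x‖₊ : ℝ≥0∞)) ^ ρ :=
      ENNReal.continuous_rpow_const.measurable.comp measurable_id.enorm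
    have hfp : (P.prod Q).map Prod.fst = P := by
      rw [Measure.map_fst_prod]; simp
    have hsp : (P.prod Q).map Prod.snd = Q := by
      rw [Measure.map_snd_prod]; simp
    have hfin1 : ∫⁻ (p : Euc d × Euc d), ((‖p.1‖₊ : ℝ≥0∞)) ^ ρ ∂(P.prod Q) ≠ ⊤ := by
      have h1 : ∫⁻ (p : Euc d × Euc d), ((‖p.1‖₊ : ℝ≥0∞)) ^ ρ ∂(P.prod Q)
          = ∫⁻ x, ((‖x‖₊ : ℝ≥0∞)) ^ ρ ∂P := by
        conv_rhs => rw [← hfp]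
        rw [lintegral_map hnormme measurable_fst]
      rw [h1]; exact hPm'
    have hfin2 : ∫⁻ (p : Euc d × Euc d), ((‖p.2‖₊ : ℝ≥0∞)) ^ ρ ∂(P.prod Q) ≠ ⊤ := by
      have h1 : ∫⁻ (p : Euc d × Euc d), ((‖p.2‖₊ : ℝ≥0∞)) ^ ρ ∂(P.prod Q)
          = ∫⁻ x, ((‖x‖₊ : ℝ≥0∞)) ^ ρ ∂Q := by
        conv_rhs => rw [← hsp]
        rw [lintegral_map hnormme measurable_snd]
      rw [h1]; exact hQm'
    exact mink_ne_top hρ hm1.aemeasurable hm2.aemeasurable hfin1 hfin2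
  have hIpq_def : Wass ρ P Q = ((⨅ γ ∈ Couplings P Q, KPQ γ).toReal) ^ (1/ρ) := by
    rw [Wass]
    congr 2
    exact iInf_congr fun γ => iInf_congr fun _ => hcost d γ
  set Ipq : ℝ≥0∞ := ⨅ γ ∈ Couplings P Q, KPQ γ with hIpqdef
  have hIpq_ne : Ipq ≠ ⊤ :=
    ne_top_of_le_ne_top hprod_ne (iInf₂_le _ hprod_mem)
  have hIpq_le : Ipq ≤ ENNReal.ofReal (θ ^ ρ) := by
    have h1 : (Ipq.toReal) ^ (1/ρ) ≤ θ := by rw [hIpq_def] at hWθ; exact hWθ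
    have h2 : Ipq.toReal ≤ θ ^ ρ := by
      have h3 : Ipq.toReal = ((Ipq.toReal) ^ (1/ρ)) ^ ρ := by
        rw [← Real.rpow_mul ENNReal.toReal_nonneg, one_div_mul_cancel hρne, Real.rpow_one]
      rw [h3]
      exact Real.rpow_le_rpow (Real.rpow_nonneg ENNReal.toReal_nonneg _) h1 hρ0.le
    calc Ipq = ENNReal.ofReal Ipq.toReal := (ENNReal.ofReal_toReal hIpq_ne).symm
      _ ≤ ENNReal.ofReal (θ ^ ρ) := ENNReal.ofReal_le_ofReal h2
  -- the target infimum
  set I : ℝ≥0∞ := ⨅ γ ∈ Couplings (Q.map f) ((P.map Δ).map f),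
    ∫⁻ p, ENNReal.ofReal (‖p.1 - p.2‖ ^ ρ) ∂γ with hIdef
  set S : Euc d → ℝ≥0∞ := fun y => ∑ j, (R j).indicator (fun _ => ENNReal.ofReal (s j)) y
    with hSdef
  have hSme : Measurable S :=
    Finset.measurable_sum _ fun j _ => measurable_const.indicator (hRm j)
  -- main ε-step
  have hkey : ∀ ε : ℝ, 0 < ε →
      I ≤ ENNReal.ofReal (lam * ((θ + θd) + ε) ^ ρ + ∑ j, (P (R j)).toReal * s j) := by
    intro ε hε
    have hlt : Ipq < ENNReal.ofReal ((θ + ε) ^ ρ) := by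
      refine lt_of_le_of_lt hIpq_le ?_
      rw [ENNReal.ofReal_lt_ofReal_iff (by positivity)]
      exact Real.rpow_lt_rpow hθ (by linarith) hρ0
    obtain ⟨μ, hμmem, hμcost⟩ : ∃ μ ∈ Couplings P Q, KPQ μ ≤ ENNReal.ofReal ((θ + ε) ^ ρ) := by
      by_contra hcon
      push_neg at hcon
      have : ENNReal.ofReal ((θ + ε) ^ ρ) ≤ Ipq :=
        le_iInf₂ fun γ hγ => (hcon γ hγ).le
      exact absurd hlt (not_lt.mpr this)
    obtain ⟨hμprob, hμfst, hμsnd⟩ := hμmem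
    haveI := hμprob
    set g : Euc d × Euc d → Euc q × Euc q := fun p => (f p.2, f (Δ p.1)) with hgdef
    have hgmeas : Measurable g :=
      (hf.comp measurable_snd).prodMk (hf.comp (hΔmeas.comp measurable_fst))
    have hγmem : μ.map g ∈ Couplings (Q.map f) ((P.map Δ).map f) := by
      refine ⟨Measure.isProbabilityMeasure_map hgmeas.aemeasurable, ?_, ?_⟩
      · rw [Measure.map_map measurable_fst hgmeas]
        have : (Prod.fst ∘ g) = f ∘ Prod.snd := rfl
        rw [this, ← Measure.map_map hf measurable_snd, hμsnd]
      · rw [Measure.map_map measurable_snd hgmeas]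
        have : (Prod.snd ∘ g) = f ∘ (Δ ∘ Prod.fst) := rfl
        rw [this, ← Measure.map_map hf (hΔmeas.comp measurable_fst),
          ← Measure.map_map hΔmeas measurable_fst, hμfst]
    have hI_le : I ≤ ∫⁻ p, ((‖f p.2 - f (Δ p.1)‖₊ : ℝ≥0∞)) ^ ρ ∂μ := by
      refine le_trans (iInf₂_le _ hγmem) ?_
      rw [hcost q (μ.map g), lintegral_map (hcostm q) hgmeas]
    -- a.e. membership
    have hae1 : ∀ᵐ p ∂μ, p.1 ∈ X := by
      rw [ae_iff]
      have h1 : {p : Euc d × Euc d | ¬ p.1 ∈ X} = Prod.fst ⁻¹' Xᶜ := rfl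
      rw [h1, ← Measure.map_apply measurable_fst hXm.compl, hμfst,
        measure_compl hXm (measure_ne_top P X), hPX]
      simp
    have hae2 : ∀ᵐ p ∂μ, p.2 ∈ X := by
      rw [ae_iff]
      have h1 : {p : Euc d × Euc d | ¬ p.2 ∈ X} = Prod.snd ⁻¹' Xᶜ := rfl
      rw [h1, ← Measure.map_apply measurable_snd hXm.compl, hμsnd,
        measure_compl hXm (measure_ne_top Q X), hQX]
      simp
    have hptwise : ∀ᵐ p ∂μ, ((‖f p.2 - f (Δ p.1)‖₊ : ℝ≥0∞)) ^ ρ ≤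
        ENNReal.ofReal lam * ((‖p.2 - Δ p.1‖₊ : ℝ≥0∞)) ^ ρ + S p.1 := by
      filter_upwards [hae1, hae2] with p hx1 hx2
      obtain ⟨j, hj⟩ : ∃ j, p.1 ∈ R j := Set.mem_iUnion.mp (by rw [hRX]; exact hx1)
      rw [hΔeq j p.1 hj]
      have hreal : ‖f p.2 - f (c j)‖ ^ ρ ≤ lam * ‖p.2 - c j‖ ^ ρ + s j := by
        linarith [hs j p.2 hx2]
      have hSb : ENNReal.ofReal (s j) ≤ S p.1 := by
        have h2 : S p.1 = ∑ i, (R i).indicator (fun _ => ENNReal.ofReal (s i)) p.1 := rfl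
        rw [h2]
        calc ENNReal.ofReal (s j)
            = (R j).indicator (fun _ => ENNReal.ofReal (s j)) p.1 := by
              rw [Set.indicator_of_mem hj]
          _ ≤ ∑ i, (R i).indicator (fun _ => ENNReal.ofReal (s i)) p.1 :=
              Finset.single_le_sum
                (f := fun i => (R i).indicator (fun _ => ENNReal.ofReal (s i)) p.1)
                (fun i _ => zero_le) (Finset.mem_univ j)
      calc ((‖f p.2 - f (c j)‖₊ : ℝ≥0∞)) ^ ρ
          = ENNReal.ofReal (‖f p.2 - f (c j)‖ ^ ρ) := (ofReal_norm_rpow hρ0.le _).symm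
        _ ≤ ENNReal.ofReal (lam * ‖p.2 - c j‖ ^ ρ + s j) := ENNReal.ofReal_le_ofReal hreal
        _ ≤ ENNReal.ofReal (lam * ‖p.2 - c j‖ ^ ρ) + ENNReal.ofReal (s j) :=
            ENNReal.ofReal_add_le
        _ = ENNReal.ofReal lam * ((‖p.2 - c j‖₊ : ℝ≥0∞)) ^ ρ + ENNReal.ofReal (s j) := by
            rw [ENNReal.ofReal_mul hlam, ofReal_norm_rpow hρ0.le]
        _ ≤ ENNReal.ofReal lam * ((‖p.2 - c j‖₊ : ℝ≥0∞)) ^ ρ + S p.1 :=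
            add_le_add_right hSb _
    have hTme : Measurable (fun p : Euc d × Euc d => ((‖p.2 - Δ p.1‖₊ : ℝ≥0∞)) ^ ρ) :=
      ENNReal.continuous_rpow_const.measurable.comp
        (measurable_snd.sub (hΔmeas.comp measurable_fst)).enorm
    -- bound the transport term
    have hT : ∫⁻ p, ((‖p.2 - Δ p.1‖₊ : ℝ≥0∞)) ^ ρ ∂μ ≤
        (ENNReal.ofReal (θ + ε) + ENNReal.ofReal θd) ^ ρ := by
      have hptw : ∀ p : Euc d × Euc d, ((‖p.2 - Δ p.1‖₊ : ℝ≥0∞)) ^ ρ ≤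
          ((‖p.2 - p.1‖₊ : ℝ≥0∞) + (‖p.1 - Δ p.1‖₊ : ℝ≥0∞)) ^ ρ := by
        intro p
        refine ENNReal.rpow_le_rpow ?_ hρ0.le
        calc ((‖p.2 - Δ p.1‖₊ : ℝ≥0∞)) = ((‖(p.2 - p.1) + (p.1 - Δ p.1)‖₊ : ℝ≥0∞)) := by
              rw [sub_add_sub_cancel]
          _ ≤ ((‖p.2 - p.1‖₊ + ‖p.1 - Δ p.1‖₊ : ℝ≥0) : ℝ≥0∞) := by
              exact_mod_cast nnnorm_add_le _ _
          _ = (‖p.2 - p.1‖₊ : ℝ≥0∞) + (‖p.1 - Δ p.1‖₊ : ℝ≥0∞) := ENNReal.coe_add _ _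
      have hFme : Measurable fun p : Euc d × Euc d => ((‖p.2 - p.1‖₊ : ℝ≥0∞)) :=
        (measurable_snd.sub measurable_fst).enorm
      have hGme : Measurable fun p : Euc d × Euc d => ((‖p.1 - Δ p.1‖₊ : ℝ≥0∞)) :=
        (measurable_fst.sub (hΔmeas.comp measurable_fst)).enorm
      have hFA : (∫⁻ p, ((‖p.2 - p.1‖₊ : ℝ≥0∞)) ^ ρ ∂μ) ^ (1/ρ) ≤ ENNReal.ofReal (θ + ε) := by
        have h1 : ∫⁻ p, ((‖p.2 - p.1‖₊ : ℝ≥0∞)) ^ ρ ∂μ = KPQ μ := by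
          exact lintegral_congr fun p => by rw [← neg_sub p.1 p.2, nnnorm_neg]
        rw [h1]
        calc (KPQ μ) ^ (1/ρ) ≤ (ENNReal.ofReal ((θ + ε) ^ ρ)) ^ (1/ρ) :=
              ENNReal.rpow_le_rpow hμcost hiρ0
          _ = ENNReal.ofReal (θ + ε) := by
              rw [← ENNReal.ofReal_rpow_of_nonneg (by linarith) hρ0.le, ← ENNReal.rpow_mul,
                mul_one_div_cancel hρne, ENNReal.rpow_one]
      have hGBme : Measurable fun y : Euc d => ((‖y - Δ y‖₊ : ℝ≥0∞)) ^ ρ :=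
        ENNReal.continuous_rpow_const.measurable.comp (measurable_id.sub hΔmeas).enorm
      have hGB : (∫⁻ p, ((‖p.1 - Δ p.1‖₊ : ℝ≥0∞)) ^ ρ ∂μ) ^ (1/ρ) ≤ ENNReal.ofReal θd := by
        have h1 : ∫⁻ p, ((‖p.1 - Δ p.1‖₊ : ℝ≥0∞)) ^ ρ ∂μ
            = ∫⁻ y, ((‖y - Δ y‖₊ : ℝ≥0∞)) ^ ρ ∂P := by
          rw [← hμfst, lintegral_map hGBme measurable_fst]
        rw [h1, hGint, hofReal_θd]
      exact le_trans (lintegral_mono hptw)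
        (mink hρ hFme.aemeasurable hGme.aemeasurable hFA hGB)
    -- assemble
    have hSint : ∫⁻ p, S p.1 ∂μ = ENNReal.ofReal (∑ j, (P (R j)).toReal * s j) := by
      have h1 : ∫⁻ p, S p.1 ∂μ = ∫⁻ y, S y ∂P := by
        rw [← hμfst, lintegral_map hSme measurable_fst]
      rw [h1]
      simp only [hSdef]
      rw [lintegral_finset_sum _ fun j _ => measurable_const.indicator (hRm j)]
      rw [ENNReal.ofReal_sum_of_nonneg
        (fun j _ => mul_nonneg ENNReal.toReal_nonneg (hs0 j))]
      refine Finset.sum_congr rfl fun j _ => ?_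
      rw [lintegral_indicator_const (hRm j), ENNReal.ofReal_mul ENNReal.toReal_nonneg,
        ENNReal.ofReal_toReal (measure_ne_top P (R j)), mul_comm]
    calc I ≤ ∫⁻ p, ((‖f p.2 - f (Δ p.1)‖₊ : ℝ≥0∞)) ^ ρ ∂μ := hI_le
      _ ≤ ∫⁻ p, (ENNReal.ofReal lam * ((‖p.2 - Δ p.1‖₊ : ℝ≥0∞)) ^ ρ + S p.1) ∂μ :=
          lintegral_mono_ae hptwise
      _ = ENNReal.ofReal lam * ∫⁻ p, ((‖p.2 - Δ p.1‖₊ : ℝ≥0∞)) ^ ρ ∂μ + ∫⁻ p, S p.1 ∂μ := by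
          rw [lintegral_add_left (hTme.const_mul _), lintegral_const_mul _ hTme]
      _ ≤ ENNReal.ofReal lam * (ENNReal.ofReal (θ + ε) + ENNReal.ofReal θd) ^ ρ
            + ENNReal.ofReal (∑ j, (P (R j)).toReal * s j) := by
          rw [hSint]
          exact add_le_add_left (mul_le_mul_right hT _) _
      _ = ENNReal.ofReal (lam * ((θ + θd) + ε) ^ ρ + ∑ j, (P (R j)).toReal * s j) := by
          rw [← ENNReal.ofReal_add (by linarith) hθd0,
            ENNReal.ofReal_rpow_of_nonneg (by linarith) hρ0.le,
            ← ENNReal.ofReal_mul hlam,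
            ← ENNReal.ofReal_add (by positivity)
              (Finset.sum_nonneg fun j _ => mul_nonneg ENNReal.toReal_nonneg (hs0 j))]
          ring_nf
    -- note: ring_nf handles (θ + ε + θd) vs (θ + θd + ε)
  -- pass to the limit ε → 0⁺
  have hlim : I ≤ ENNReal.ofReal (lam * (θ + θd) ^ ρ + ∑ j, (P (R j)).toReal * s j) := by
    have htend : Filter.Tendsto
        (fun ε : ℝ => ENNReal.ofReal (lam * ((θ + θd) + ε) ^ ρ + ∑ j, (P (R j)).toReal * s j))
        (nhdsWithin 0 (Set.Ioi 0))
        (nhds (ENNReal.ofReal (lam * (θ + θd) ^ ρ + ∑ j, (P (R j)).toReal * s j))) := by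
      have hcont : ContinuousAt
          (fun ε : ℝ => ENNReal.ofReal (lam * ((θ + θd) + ε) ^ ρ + ∑ j, (P (R j)).toReal * s j))
          0 := by
        refine ENNReal.continuous_ofReal.continuousAt.comp ?_
        refine ContinuousAt.add ?_ continuousAt_const
        refine ContinuousAt.mul continuousAt_const ?_
        have : ContinuousAt (fun x : ℝ => x ^ ρ) ((θ + θd) + 0) :=
          (Real.continuous_rpow_const hρ0.le).continuousAt
        exact this.comp (continuousAt_const.add continuousAt_id)
      have := hcont.tendsto
      simp only [add_zero] at this
      exact this.mono_left nhdsWithin_le_nhds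
    refine ge_of_tendsto htend ?_
    filter_upwards [self_mem_nhdsWithin] with ε hε
    exact hkey ε hε
  -- conclude
  have hB0 : 0 ≤ lam * (θ + θd) ^ ρ + ∑ j, (P (R j)).toReal * s j := by
    have : 0 ≤ (θ + θd) ^ ρ := Real.rpow_nonneg (by linarith) _
    have h2 : 0 ≤ ∑ j, (P (R j)).toReal * s j :=
      Finset.sum_nonneg fun j _ => mul_nonneg ENNReal.toReal_nonneg (hs0 j)
    positivity
  have hItoReal : I.toReal ≤ lam * (θ + θd) ^ ρ + ∑ j, (P (R j)).toReal * s j :=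
    ENNReal.toReal_le_of_le_ofReal hB0 hlim
  rw [Wass]
  exact Real.rpow_le_rpow ENNReal.toReal_nonneg hItoReal hiρ0
end
end

section
/- Let X ⊆ ℝ^d, ρ ≥ 1, P a Borel probability measure on X with finite ρ-th moment, R a measurable partition of X, C ⊂ X a set of locations, and f : X → Y ⊆ ℝ^q measurable with all relevant pushforwards having finite ρ-th moments. Let θ_d := ( Σ_k ∫_{R_k} ‖x − c_k‖^ρ dP(x) )^{1/ρ}, and for a probability measure T on X and τ ≥ 0 define the relaxed set S_τ(T) := { γ probability measure on X × X : ∫_{X×X} ‖x_1 − x_2‖^ρ dγ(x_1,x_2) ≤ τ^ρ and the second marginal of γ equals T }. Then for any θ ≥ 0, ( sup_{Q ∈ B_θ(P)} W_ρ(f#Q, f#Δ_{R,C}#P) )^ρ ≤ sup_{γ ∈ S_{θ+θ_d}(Δ_{R,C}#P)} ∫_{X×X} ‖f(x_1) − f(x_2)‖^ρ dγ(x_1, x_2). -/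
open MeasureTheory ENNReal

noncomputable section

/-- The relaxed set `S_τ(T)`: probability measures `γ` on `X × X` whose transport cost is
at most `τ^ρ` and whose second marginal is `T`. -/
def Srelax {β : Type*} [MeasurableSpace β] [NormedAddCommGroup β]
    (ρ τ : ℝ) (T : Measure β) : Set (Measure (β × β)) :=
  {γ | IsProbabilityMeasure γ ∧
    (∫⁻ p, ENNReal.ofReal (‖p.1 - p.2‖ ^ ρ) ∂γ) ≤ ENNReal.ofReal (τ ^ ρ) ∧
    γ.map Prod.snd = T}

namespace Stmt14Aux

open Metric Set Filter Topology

variable {n : ℕ} {ρ : ℝ}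

noncomputable def cost {β : Type*} [MeasurableSpace β] [NormedAddCommGroup β]
    (ρ : ℝ) (γ : Measure (β × β)) : ℝ≥0∞ :=
  ∫⁻ p, ENNReal.ofReal (‖p.1 - p.2‖ ^ ρ) ∂γ

lemma meas_costInt : Measurable (fun p : Euc n × Euc n => ENNReal.ofReal (‖p.1 - p.2‖ ^ ρ)) :=
  (((measurable_fst.sub measurable_snd).norm).pow measurable_const).ennreal_ofReal

lemma meas_momInt : Measurable (fun x : Euc n => ENNReal.ofReal (‖x‖ ^ ρ)) :=
  (measurable_norm.pow measurable_const).ennreal_ofReal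

lemma norm_sub_rpow_le (hρ : 0 ≤ ρ) (a b : Euc n) :
    ‖a - b‖ ^ ρ ≤ 2 ^ ρ * (‖a‖ ^ ρ + ‖b‖ ^ ρ) := by
  have hm : 0 ≤ max ‖a‖ ‖b‖ := le_max_of_le_left (norm_nonneg a)
  have h1 : ‖a - b‖ ≤ 2 * max ‖a‖ ‖b‖ := by
    have := norm_sub_le a b
    have h2 := le_max_left ‖a‖ ‖b‖
    have h3 := le_max_right ‖a‖ ‖b‖
    linarith
  calc ‖a - b‖ ^ ρ ≤ (2 * max ‖a‖ ‖b‖) ^ ρ := Real.rpow_le_rpow (norm_nonneg _) h1 hρ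
    _ = 2 ^ ρ * (max ‖a‖ ‖b‖) ^ ρ := Real.mul_rpow (by norm_num) hm
    _ ≤ 2 ^ ρ * (‖a‖ ^ ρ + ‖b‖ ^ ρ) := by
        apply mul_le_mul_of_nonneg_left _ (Real.rpow_nonneg (by norm_num) ρ)
        rcases max_cases ‖a‖ ‖b‖ with ⟨h, _⟩ | ⟨h, _⟩ <;> rw [h]
        · exact le_add_of_nonneg_right (Real.rpow_nonneg (norm_nonneg _) _)
        · exact le_add_of_nonneg_left (Real.rpow_nonneg (norm_nonneg _) _)

lemma cost_prod_lt_top (hρ : 0 ≤ ρ) (μ ν : Measure (Euc n))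
    [IsProbabilityMeasure μ] [IsProbabilityMeasure ν]
    (hμ : HasFiniteMoment ρ μ) (hν : HasFiniteMoment ρ ν) :
    cost ρ (μ.prod ν) < ⊤ := by
  have hb : cost ρ (μ.prod ν) ≤
      ∫⁻ p, ENNReal.ofReal (2 ^ ρ) *
        (ENNReal.ofReal (‖p.1‖ ^ ρ) + ENNReal.ofReal (‖p.2‖ ^ ρ)) ∂(μ.prod ν) := by
    apply lintegral_mono fun p => ?_
    calc ENNReal.ofReal (‖p.1 - p.2‖ ^ ρ)
        ≤ ENNReal.ofReal (2 ^ ρ * (‖p.1‖ ^ ρ + ‖p.2‖ ^ ρ)) :=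
          ENNReal.ofReal_le_ofReal (norm_sub_rpow_le hρ _ _)
      _ = _ := by
          rw [ENNReal.ofReal_mul (Real.rpow_nonneg (by norm_num) _),
            ENNReal.ofReal_add (Real.rpow_nonneg (norm_nonneg _) _)
              (Real.rpow_nonneg (norm_nonneg _) _)]
  refine hb.trans_lt ?_
  have hm1 : Measurable fun p : Euc n × Euc n => ENNReal.ofReal (‖p.1‖ ^ ρ) := by
    exact meas_momInt.comp measurable_fst
  have hm2 : Measurable fun p : Euc n × Euc n => ENNReal.ofReal (‖p.2‖ ^ ρ) := by
    exact meas_momInt.comp measurable_snd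
  rw [lintegral_const_mul _ (by exact hm1.add hm2 : Measurable fun p : Euc n × Euc n =>
    ENNReal.ofReal (‖p.1‖ ^ ρ) + ENNReal.ofReal (‖p.2‖ ^ ρ))]
  have h1 : ∫⁻ p : Euc n × Euc n, ENNReal.ofReal (‖p.1‖ ^ ρ) ∂(μ.prod ν)
      = ∫⁻ x, ENNReal.ofReal (‖x‖ ^ ρ) ∂μ := by
    have := lintegral_map (μ := μ.prod ν) (meas_momInt (ρ := ρ) (n := n)) measurable_fst
    rw [Measure.map_fst_prod, measure_univ, one_smul] at this
    exact this.symm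
  have h2 : ∫⁻ p : Euc n × Euc n, ENNReal.ofReal (‖p.2‖ ^ ρ) ∂(μ.prod ν)
      = ∫⁻ x, ENNReal.ofReal (‖x‖ ^ ρ) ∂ν := by
    have := lintegral_map (μ := μ.prod ν) (meas_momInt (ρ := ρ) (n := n)) measurable_snd
    rw [Measure.map_snd_prod, measure_univ, one_smul] at this
    exact this.symm
  rw [lintegral_add_left hm1, h1, h2]
  exact ENNReal.mul_lt_top ENNReal.ofReal_lt_top (ENNReal.add_lt_top.mpr ⟨hμ, hν⟩)

lemma prod_mem_couplings (μ ν : Measure (Euc n)) [IsProbabilityMeasure μ]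
    [IsProbabilityMeasure ν] : μ.prod ν ∈ Couplings μ ν :=
  ⟨inferInstance, by simp [Measure.map_fst_prod], by simp [Measure.map_snd_prod]⟩

lemma swap_couplings {μ ν : Measure (Euc n)} {γ : Measure (Euc n × Euc n)}
    (h : γ ∈ Couplings μ ν) :
    γ.map Prod.swap ∈ Couplings ν μ ∧ cost ρ (γ.map Prod.swap) = cost ρ γ := by
  obtain ⟨hp, h1, h2⟩ := h
  haveI := hp
  constructor
  · refine ⟨Measure.isProbabilityMeasure_map measurable_swap.aemeasurable, ?_, ?_⟩
    · rw [Measure.map_map measurable_fst measurable_swap]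
      exact h2
    · rw [Measure.map_map measurable_snd measurable_swap]
      exact h1
  · rw [cost, cost, lintegral_map meas_costInt measurable_swap]
    apply lintegral_congr fun p => ?_
    simp [norm_sub_rev p.2 p.1]

lemma exists_coupling (hρ : 1 ≤ ρ) {θ : ℝ} (hθ : 0 ≤ θ) (P Q : Measure (Euc n))
    [IsProbabilityMeasure P] [IsProbabilityMeasure Q]
    (hPm : HasFiniteMoment ρ P) (hQm : HasFiniteMoment ρ Q)
    (hW : Wass ρ P Q ≤ θ) (ε : ℝ≥0∞) (hε : ε ≠ 0) :
    ∃ γ ∈ Couplings P Q, cost ρ γ < ENNReal.ofReal (θ ^ ρ) + ε := by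
  have hρ0 : (0:ℝ) < ρ := lt_of_lt_of_le one_pos hρ
  set I := ⨅ γ ∈ Couplings P Q, cost ρ γ with hI
  have hIle : I ≤ cost ρ (P.prod Q) := iInf₂_le _ (prod_mem_couplings P Q)
  have hIlt : I < ⊤ := hIle.trans_lt (cost_prod_lt_top hρ0.le P Q hPm hQm)
  have h2 : I.toReal ^ (1/ρ) ≤ θ := hW
  have h1 : I.toReal ≤ θ ^ ρ := by
    calc I.toReal = (I.toReal ^ (1/ρ)) ^ ρ := by
          rw [← Real.rpow_mul ENNReal.toReal_nonneg, one_div_mul_cancel hρ0.ne', Real.rpow_one]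
      _ ≤ θ ^ ρ := Real.rpow_le_rpow (Real.rpow_nonneg ENNReal.toReal_nonneg _) h2 hρ0.le
  have hIle2 : I ≤ ENNReal.ofReal (θ ^ ρ) := by
    rw [← ENNReal.ofReal_toReal hIlt.ne]
    exact ENNReal.ofReal_le_ofReal h1
  have hlt : I < ENNReal.ofReal (θ ^ ρ) + ε :=
    hIle2.trans_lt (ENNReal.lt_add_right ENNReal.ofReal_ne_top hε)
  rw [hI, iInf_lt_iff] at hlt
  obtain ⟨γ, hγ⟩ := hlt
  rw [iInf_lt_iff] at hγ
  obtain ⟨hmem, hlt2⟩ := hγ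
  exact ⟨γ, hmem, hlt2⟩

lemma le_on_closed (hρ : 1 ≤ ρ) (P Q : Measure (Euc n)) [IsProbabilityMeasure P]
    [IsProbabilityMeasure Q]
    (h : ∀ ε : ℝ≥0∞, ε ≠ 0 → ∃ γ ∈ Couplings P Q, cost ρ γ ≤ ε)
    (F : Set (Euc n)) (hF : IsClosed F) : P F ≤ Q F := by
  have hρ0 : (0:ℝ) < ρ := lt_of_lt_of_le one_pos hρ
  have hthick : ∀ δ : ℝ, 0 < δ → P F ≤ Q (thickening δ F) := by
    intro δ hδ
    have hd : (0:ℝ) < δ ^ ρ := Real.rpow_pos_of_pos hδ ρ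
    refine ENNReal.le_of_forall_pos_le_add fun η hη _ => ?_
    obtain ⟨γ, ⟨hγp, hγ1, hγ2⟩, hc⟩ := h (ENNReal.ofReal (δ ^ ρ) * η)
      (mul_ne_zero (by simp [ENNReal.ofReal_eq_zero, not_le, hd]) (by exact_mod_cast hη.ne'))
    haveI := hγp
    have hPF : P F = γ (Prod.fst ⁻¹' F) := by
      rw [← hγ1, Measure.map_apply measurable_fst hF.measurableSet]
    have hQT : γ (Prod.snd ⁻¹' thickening δ F) = Q (thickening δ F) := by
      rw [← hγ2, Measure.map_apply measurable_snd isOpen_thickening.measurableSet]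
    have hsub : Prod.fst ⁻¹' F ⊆ Prod.snd ⁻¹' thickening δ F ∪
        {p : Euc n × Euc n | ENNReal.ofReal (δ ^ ρ) ≤ ENNReal.ofReal (‖p.1 - p.2‖ ^ ρ)} := by
      rintro ⟨x, y⟩ hx
      by_cases hy : y ∈ thickening δ F
      · exact Or.inl hy
      · refine Or.inr ?_
        have hdy : δ ≤ dist y x := by
          by_contra hlt
          exact hy (mem_thickening_iff.mpr ⟨x, hx, not_le.mp hlt⟩)
        have h2 : δ ≤ ‖x - y‖ := by rwa [dist_comm, dist_eq_norm] at hdy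
        exact ENNReal.ofReal_le_ofReal (Real.rpow_le_rpow hδ.le h2 hρ0.le)
    have hmar : γ {p : Euc n × Euc n |
        ENNReal.ofReal (δ ^ ρ) ≤ ENNReal.ofReal (‖p.1 - p.2‖ ^ ρ)} ≤ η := by
      have hmm := mul_meas_ge_le_lintegral₀ (μ := γ)
        (meas_costInt (ρ := ρ) (n := n)).aemeasurable (ENNReal.ofReal (δ ^ ρ))
      have h3 : ENNReal.ofReal (δ ^ ρ) *
          γ {p : Euc n × Euc n | ENNReal.ofReal (δ ^ ρ) ≤ ENNReal.ofReal (‖p.1 - p.2‖ ^ ρ)}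
          ≤ ENNReal.ofReal (δ ^ ρ) * η := hmm.trans hc
      exact (ENNReal.mul_le_mul_iff_right (by simp [ENNReal.ofReal_eq_zero, not_le, hd])
        ENNReal.ofReal_ne_top).mp h3
    calc P F = γ (Prod.fst ⁻¹' F) := hPF
      _ ≤ γ (Prod.snd ⁻¹' thickening δ F ∪ _) := measure_mono hsub
      _ ≤ γ (Prod.snd ⁻¹' thickening δ F) + γ {p : Euc n × Euc n |
            ENNReal.ofReal (δ ^ ρ) ≤ ENNReal.ofReal (‖p.1 - p.2‖ ^ ρ)} := measure_union_le _ _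
      _ ≤ Q (thickening δ F) + η := by rw [hQT]; exact add_le_add le_rfl hmar
  have ht := tendsto_measure_thickening_of_isClosed (μ := Q)
    ⟨1, one_pos, measure_ne_top Q _⟩ hF
  refine ge_of_tendsto ht ?_
  filter_upwards [self_mem_nhdsWithin] with δ hδ
  exact hthick δ hδ

lemma measure_eq_of_couplings (hρ : 1 ≤ ρ) (P Q : Measure (Euc n))
    [IsProbabilityMeasure P] [IsProbabilityMeasure Q]
    (h : ∀ ε : ℝ≥0∞, ε ≠ 0 → ∃ γ ∈ Couplings P Q, cost ρ γ ≤ ε) : P = Q := by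
  have hsymm : ∀ ε : ℝ≥0∞, ε ≠ 0 → ∃ γ ∈ Couplings Q P, cost ρ γ ≤ ε := by
    intro ε hε
    obtain ⟨γ, hγ, hc⟩ := h ε hε
    obtain ⟨hmem, hcost⟩ := swap_couplings (ρ := ρ) hγ
    exact ⟨γ.map Prod.swap, hmem, hcost.le.trans hc⟩
  refine ext_of_generate_finite {s : Set (Euc n) | IsClosed s}
    (BorelSpace.measurable_eq.trans borel_eq_generateFrom_isClosed) isPiSystem_isClosed
    (fun F hF => le_antisymm (le_on_closed hρ P Q h F hF) (le_on_closed hρ Q P hsymm F hF))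
    (by simp)

lemma diag_couplings (ν : Measure (Euc n)) [IsProbabilityMeasure ν] (hρ0 : ρ ≠ 0) :
    ν.map (fun y => (y, y)) ∈ Couplings ν ν ∧ cost ρ (ν.map fun y => (y, y)) = 0 := by
  have hdm : Measurable fun y : Euc n => (y, y) := measurable_id.prodMk measurable_id
  refine ⟨⟨Measure.isProbabilityMeasure_map hdm.aemeasurable, ?_, ?_⟩, ?_⟩
  · rw [Measure.map_map measurable_fst hdm]
    exact Measure.map_id
  · rw [Measure.map_map measurable_snd hdm]
    exact Measure.map_id
  · rw [cost, lintegral_map meas_costInt hdm]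
    simp [Real.zero_rpow hρ0]

end Stmt14Aux

open Stmt14Aux Metric Set Filter Topology

/-- worst-case relaxation. For every `Q ∈ B_θ(P)`,
`(W_ρ(f#Q, f#Δ_{R,C}#P))^ρ ≤ sup_{γ ∈ S_{θ+θ_d}(Δ_{R,C}#P)} ∫ ‖f(x₁) − f(x₂)‖^ρ dγ`. -/
theorem stmt14 {d q N : ℕ} (ρ : ℝ) (hρ : 1 ≤ ρ) (θ : ℝ) (hθ : 0 ≤ θ)
    (X : Set (Euc d)) (hXm : MeasurableSet X) (Y : Set (Euc q))
    (P : Measure (Euc d)) (hP : IsProbabilityMeasure P) (hPX : P X = 1)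
    (hPm : HasFiniteMoment ρ P)
    (R : Fin N → Set (Euc d)) (hR : IsMeasPartition R X)
    (c : Fin N → Euc d) (hc : ∀ k, c k ∈ X)
    (f : Euc d → Euc q) (hf : Measurable f) (hfXY : Set.MapsTo f X Y)
    (hfΔm : HasFiniteMoment ρ ((P.map (quantMap R c)).map f))
    (θd : ℝ) (hθd : θd = (∑ k, ∫ x in R k, ‖x - c k‖ ^ ρ ∂P) ^ (1/ρ)) :
    ∀ Q : Measure (Euc d), IsProbabilityMeasure Q → Q X = 1 → HasFiniteMoment ρ Q →
      Wass ρ P Q ≤ θ → HasFiniteMoment ρ (Q.map f) →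
      ENNReal.ofReal (Wass ρ (Q.map f) ((P.map (quantMap R c)).map f) ^ ρ) ≤
        ⨆ γ ∈ Srelax ρ (θ + θd) (P.map (quantMap R c)),
          ∫⁻ p, ENNReal.ofReal (‖f p.1 - f p.2‖ ^ ρ) ∂γ := by
  intro Q hQ hQX hQm hW hQfm
  haveI := hP; haveI := hQ
  obtain ⟨hRm, hRX, hRd⟩ := hR
  have hρ0 : (0:ℝ) < ρ := lt_of_lt_of_le one_pos hρ
  set Δ := quantMap R c with hΔdef
  have hΔmeas : Measurable Δ := by
    have hh : Δ = fun x => ∑ i, (R i).indicator (fun _ => c i) x := rfl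
    rw [hh]
    exact Finset.measurable_sum _ fun i _ => measurable_const.indicator (hRm i)
  haveI : IsProbabilityMeasure (P.map Δ) := Measure.isProbabilityMeasure_map hΔmeas.aemeasurable
  haveI : IsProbabilityMeasure (Q.map f) := Measure.isProbabilityMeasure_map hf.aemeasurable
  haveI : IsProbabilityMeasure ((P.map Δ).map f) := Measure.isProbabilityMeasure_map hf.aemeasurable
  have hΔon : ∀ k, ∀ x ∈ R k, Δ x = c k := by
    intro k x hx
    show ∑ i, (R i).indicator (fun _ => c i) x = c k
    rw [Finset.sum_eq_single_of_mem k (Finset.mem_univ k)]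
    · exact Set.indicator_of_mem hx _
    · intro i _ hik
      apply Set.indicator_of_notMem
      intro hxi
      have hmemi : x ∈ R i ∩ R k := ⟨hxi, hx⟩
      rw [hRd i k hik] at hmemi
      exact hmemi
  have hXae : ∀ᵐ x ∂P, x ∈ X := by
    have hcompl : P Xᶜ = 0 := by
      have := measure_compl hXm (measure_ne_top P X)
      rw [hPX, measure_univ] at this
      simpa using this
    rw [ae_iff]
    exact hcompl
  -- integrability facts
  have hmomInt : Integrable (fun x => ‖x‖ ^ ρ) P := by
    constructor
    · exact (measurable_norm.pow measurable_const).aestronglyMeasurable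
    · rw [hasFiniteIntegral_iff_ofReal
        (Eventually.of_forall fun x => Real.rpow_nonneg (norm_nonneg x) ρ)]
      exact hPm
  have hIk : ∀ k, Integrable (fun x => ‖x - c k‖ ^ ρ) (P.restrict (R k)) := by
    intro k
    apply Integrable.mono' (g := fun x => 2 ^ ρ * (‖x‖ ^ ρ + ‖c k‖ ^ ρ))
      (((hmomInt.add (integrable_const _)).const_mul _).restrict)
      (((measurable_id.sub measurable_const).norm.pow measurable_const)).aestronglyMeasurable
    refine Eventually.of_forall fun x => ?_
    rw [Real.norm_of_nonneg (Real.rpow_nonneg (norm_nonneg _) _)]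
    exact norm_sub_rpow_le hρ0.le x (c k)
  set S : ℝ := ∑ k, ∫ x in R k, ‖x - c k‖ ^ ρ ∂P with hSdef
  have hS0 : 0 ≤ S :=
    Finset.sum_nonneg fun k _ => integral_nonneg fun x => Real.rpow_nonneg (norm_nonneg _) _
  have hθd0 : 0 ≤ θd := by rw [hθd]; exact Real.rpow_nonneg hS0 _
  -- the quantization cost
  have hae2 : (fun x => ENNReal.ofReal (‖x - Δ x‖ ^ ρ)) =ᵐ[P]
      (fun x => ∑ k, (R k).indicator (fun y => ENNReal.ofReal (‖y - c k‖ ^ ρ)) x) := by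
    filter_upwards [hXae] with x hx
    rw [← hRX] at hx
    obtain ⟨k, hk⟩ := Set.mem_iUnion.mp hx
    rw [Finset.sum_eq_single_of_mem k (Finset.mem_univ k)]
    · rw [Set.indicator_of_mem hk, hΔon k x hk]
    · intro i _ hik
      apply Set.indicator_of_notMem
      intro hxi
      have hmemi : x ∈ R i ∩ R k := ⟨hxi, hk⟩
      rw [hRd i k hik] at hmemi
      exact hmemi
  have hC2 : ∫⁻ x, ENNReal.ofReal (‖x - Δ x‖ ^ ρ) ∂P = ENNReal.ofReal S := by
    have hmk : ∀ k : Fin N, Measurable fun x : Euc d =>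
        (R k).indicator (fun y => ENNReal.ofReal (‖y - c k‖ ^ ρ)) x := by
      intro k
      exact (((measurable_id.sub measurable_const).norm.pow
        measurable_const).ennreal_ofReal).indicator (hRm k)
    rw [lintegral_congr_ae hae2, lintegral_finset_sum _ (fun k _ => hmk k)]
    have hterm : ∀ k, ∫⁻ x, (R k).indicator (fun y => ENNReal.ofReal (‖y - c k‖ ^ ρ)) x ∂P
        = ENNReal.ofReal (∫ x in R k, ‖x - c k‖ ^ ρ ∂P) := by
      intro k
      rw [lintegral_indicator (hRm k),
        ← ofReal_integral_eq_lintegral_ofReal (hIk k)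
          (Eventually.of_forall fun x => Real.rpow_nonneg (norm_nonneg _) _)]
    simp_rw [hterm]
    rw [← ENNReal.ofReal_sum_of_nonneg
      (fun k _ => integral_nonneg fun x => Real.rpow_nonneg (norm_nonneg _) _)]
  -- reduce to I ≤ sup
  set I := ⨅ γ ∈ Couplings (Q.map f) ((P.map Δ).map f), cost ρ γ with hIdef
  have hLHS : ENNReal.ofReal (Wass ρ (Q.map f) ((P.map Δ).map f) ^ ρ) ≤ I := by
    have hww : Wass ρ (Q.map f) ((P.map Δ).map f) ^ ρ = I.toReal := by
      show ((I.toReal) ^ (1/ρ)) ^ ρ = I.toReal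
      rw [← Real.rpow_mul ENNReal.toReal_nonneg, one_div_mul_cancel hρ0.ne', Real.rpow_one]
    rw [hww]
    exact ENNReal.ofReal_toReal_le
  refine hLHS.trans ?_
  have hIlt : I < ⊤ := (iInf₂_le _ (prod_mem_couplings _ _)).trans_lt
    (cost_prod_lt_top hρ0.le _ _ hQfm hfΔm)
  rcases eq_or_lt_of_le (by positivity : (0:ℝ) ≤ θ + θd) with hτ0 | hτpos
  · -- degenerate case: θ = θd = 0
    have hθ0 : θ = 0 := by linarith [hθd0, hθ]
    have hθd0' : θd = 0 := by linarith [hθd0, hθ]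
    have hθdz : θd = 0 := by linarith
    have h5 : S ^ (1/ρ) = 0 := by rw [← hθd]; exact hθdz
    have hS : S = 0 := (Real.rpow_eq_zero hS0 (one_div_ne_zero hρ0.ne')).mp h5
    have hsum0 : ∑ k, ∫ x in R k, ‖x - c k‖ ^ ρ ∂P = 0 := by rw [← hSdef]; exact hS
    have hterm0 : ∀ k : Fin N, ∫ x in R k, ‖x - c k‖ ^ ρ ∂P = 0 := by
      intro k
      have hall := (Finset.sum_eq_zero_iff_of_nonneg (fun k _ =>
        integral_nonneg fun x => Real.rpow_nonneg (norm_nonneg _) _)).mp hsum0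
      exact hall k (Finset.mem_univ k)
    have hae3 : ∀ k : Fin N, ∀ᵐ x ∂P, x ∈ R k → ‖x - c k‖ ^ ρ = 0 := by
      intro k
      have h0 := (integral_eq_zero_iff_of_nonneg
        (fun x => Real.rpow_nonneg (norm_nonneg _) _) (hIk k)).mp (hterm0 k)
      have h1 : ∀ᵐ x ∂(P.restrict (R k)), ‖x - c k‖ ^ ρ = 0 := by
        filter_upwards [h0] with x hx using hx
      exact (ae_restrict_iff' (hRm k)).mp h1
    have hΔae : Δ =ᵐ[P] id := by
      have hall : ∀ᵐ x ∂P, ∀ k : Fin N, x ∈ R k → ‖x - c k‖ ^ ρ = 0 := ae_all_iff.mpr hae3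
      filter_upwards [hXae, hall] with x hx h2
      rw [← hRX] at hx
      obtain ⟨k, hk⟩ := Set.mem_iUnion.mp hx
      have hz := h2 k hk
      have hzz := (Real.rpow_eq_zero (norm_nonneg _) hρ0.ne').mp hz
      rw [norm_eq_zero, sub_eq_zero] at hzz
      rw [hΔon k x hk]
      simpa using hzz.symm
    have hμP : P.map Δ = P := by
      rw [Measure.map_congr hΔae, Measure.map_id]
    have hPQ : P = Q := by
      apply measure_eq_of_couplings hρ P Q
      intro ε hε
      have hW0 : Wass ρ P Q ≤ 0 := hW.trans_eq hθ0
      obtain ⟨γ, hγ, hc2⟩ := exists_coupling hρ le_rfl P Q hPm hQm hW0 ε hε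
      refine ⟨γ, hγ, ?_⟩
      rw [Real.zero_rpow hρ0.ne', ENNReal.ofReal_zero, zero_add] at hc2
      exact hc2.le
    have hQfνf : Q.map f = (P.map Δ).map f := by rw [hμP, ← hPQ]
    have hI0 : I = 0 := by
      apply le_antisymm _ zero_le
      obtain ⟨hdmem, hdcost⟩ := diag_couplings (ρ := ρ) ((P.map Δ).map f) hρ0.ne'
      rw [hIdef, hQfνf]
      exact le_of_le_of_eq (iInf₂_le _ hdmem) hdcost
    rw [hI0]
    exact zero_le
  · -- nondegenerate case
    set RHS := ⨆ γ ∈ Srelax ρ (θ + θd) (P.map Δ),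
      ∫⁻ p, ENNReal.ofReal (‖f p.1 - f p.2‖ ^ ρ) ∂γ with hRHS
    have hfInt : Measurable fun p : Euc d × Euc d => ENNReal.ofReal (‖f p.1 - f p.2‖ ^ ρ) :=
      (((hf.comp measurable_fst).sub (hf.comp measurable_snd)).norm.pow
        measurable_const).ennreal_ofReal
    have hmain : ∀ t : ℝ, 0 < t → t < 1 → ENNReal.ofReal (1 - t) * I ≤ RHS := by
      intro t ht0 ht1
      have hφ0 : ((θ ^ ρ + 0) ^ (1/ρ) + θd) ^ ρ = (θ + θd) ^ ρ := by
        rw [add_zero, ← Real.rpow_mul hθ, mul_one_div_cancel hρ0.ne', Real.rpow_one]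
      have hcont : ContinuousAt (fun ε : ℝ => ((θ ^ ρ + ε) ^ (1/ρ) + θd) ^ ρ) 0 := by
        have c1 : ContinuousAt (fun ε : ℝ => (θ ^ ρ + ε) ^ (1/ρ)) 0 :=
          ContinuousAt.rpow_const ((continuous_const.add continuous_id).continuousAt)
            (Or.inr (by positivity))
        exact (c1.add continuousAt_const).rpow_const (Or.inr hρ0.le)
      have hBgt : ((θ ^ ρ + 0) ^ (1/ρ) + θd) ^ ρ < (θ + θd) ^ ρ / (1 - t) := by
        rw [hφ0]
        have hpos : 0 < (θ + θd) ^ ρ := Real.rpow_pos_of_pos hτpos ρ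
        rw [lt_div_iff₀ (by linarith)]
        nlinarith
      have hev : ∀ᶠ ε in 𝓝 (0:ℝ),
          ((θ ^ ρ + ε) ^ (1/ρ) + θd) ^ ρ < (θ + θd) ^ ρ / (1 - t) :=
        hcont.eventually_lt_const hBgt
      have hev' : ∀ᶠ ε in 𝓝[>] (0:ℝ),
          ((θ ^ ρ + ε) ^ (1/ρ) + θd) ^ ρ < (θ + θd) ^ ρ / (1 - t) :=
        Filter.Eventually.filter_mono nhdsWithin_le_nhds hev
      obtain ⟨ε, hεB, hεmem⟩ := (hev'.and eventually_mem_nhdsWithin).exists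
      have hεR : (0:ℝ) < ε := hεmem
      have hθρε : (0:ℝ) ≤ θ ^ ρ + ε := by
        have := Real.rpow_nonneg hθ ρ
        linarith
      obtain ⟨π, hπmem, hπc⟩ := exists_coupling hρ hθ P Q hPm hQm hW (ENNReal.ofReal ε)
        (by simpa [ENNReal.ofReal_eq_zero, not_le] using hεR)
      obtain ⟨hπp, hπ1, hπ2⟩ := hπmem
      haveI := hπp
      set T : Euc d × Euc d → Euc d × Euc d := fun p => (p.2, Δ p.1) with hTdef
      have hT : Measurable T := measurable_snd.prodMk (hΔmeas.comp measurable_fst)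
      set γ₀ := π.map T with hγ₀def
      haveI : IsProbabilityMeasure γ₀ := Measure.isProbabilityMeasure_map hT.aemeasurable
      have hγ₀1 : γ₀.map Prod.fst = Q := by
        rw [hγ₀def, Measure.map_map measurable_fst hT]
        have hcomp : (Prod.fst ∘ T) = Prod.snd := rfl
        rw [hcomp, hπ2]
      have hγ₀2 : γ₀.map Prod.snd = P.map Δ := by
        rw [hγ₀def, Measure.map_map measurable_snd hT]
        have hcomp : (Prod.snd ∘ T) = Δ ∘ Prod.fst := rfl
        rw [hcomp, ← Measure.map_map hΔmeas measurable_fst, hπ1]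
      have hcost0 : cost ρ γ₀ ≤ ENNReal.ofReal (((θ ^ ρ + ε) ^ (1/ρ) + θd) ^ ρ) := by
        rw [hγ₀def, cost, lintegral_map meas_costInt hT]
        set u : Euc d × Euc d → ℝ≥0∞ := fun p => ENNReal.ofReal ‖p.1 - p.2‖ with hu_def
        set v : Euc d × Euc d → ℝ≥0∞ := fun p => ENNReal.ofReal ‖p.1 - Δ p.1‖ with hv_def
        have hu : AEMeasurable u π :=
          ((measurable_fst.sub measurable_snd).norm.ennreal_ofReal).aemeasurable
        have hv : AEMeasurable v π :=
          ((measurable_fst.sub (hΔmeas.comp measurable_fst)).norm.ennreal_ofReal).aemeasurable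
        have hpt : ∀ p : Euc d × Euc d,
            ENNReal.ofReal (‖(T p).1 - (T p).2‖ ^ ρ) ≤ ((u + v) p) ^ ρ := by
          intro p
          rw [← ENNReal.ofReal_rpow_of_nonneg (norm_nonneg _) hρ0.le]
          refine ENNReal.rpow_le_rpow ?_ hρ0.le
          have htri : ‖(T p).1 - (T p).2‖ ≤ ‖p.1 - p.2‖ + ‖p.1 - Δ p.1‖ := by
            calc ‖p.2 - Δ p.1‖ = dist p.2 (Δ p.1) := (dist_eq_norm _ _).symm
              _ ≤ dist p.2 p.1 + dist p.1 (Δ p.1) := dist_triangle _ _ _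
              _ = ‖p.1 - p.2‖ + ‖p.1 - Δ p.1‖ := by rw [dist_comm, dist_eq_norm, dist_eq_norm]
          calc ENNReal.ofReal ‖(T p).1 - (T p).2‖
              ≤ ENNReal.ofReal (‖p.1 - p.2‖ + ‖p.1 - Δ p.1‖) := ENNReal.ofReal_le_ofReal htri
            _ = (u + v) p := ENNReal.ofReal_add (norm_nonneg _) (norm_nonneg _)
        have hmink := ENNReal.lintegral_Lp_add_le hu hv hρ
        have hcu : ∫⁻ a, u a ^ ρ ∂π ≤ ENNReal.ofReal (θ ^ ρ + ε) := by
          have hue : ∀ a : Euc d × Euc d, u a ^ ρ = ENNReal.ofReal (‖a.1 - a.2‖ ^ ρ) := fun a =>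
            ENNReal.ofReal_rpow_of_nonneg (norm_nonneg _) hρ0.le
          simp_rw [hue]
          rw [ENNReal.ofReal_add (Real.rpow_nonneg hθ ρ) hεR.le]
          exact hπc.le
        have hcv : ∫⁻ a, v a ^ ρ ∂π = ENNReal.ofReal S := by
          have hvv : ∀ a : Euc d × Euc d, v a ^ ρ = ENNReal.ofReal (‖a.1 - Δ a.1‖ ^ ρ) := fun a =>
            ENNReal.ofReal_rpow_of_nonneg (norm_nonneg _) hρ0.le
          simp_rw [hvv]
          have hwmeas : Measurable fun x : Euc d => ENNReal.ofReal (‖x - Δ x‖ ^ ρ) :=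
            ((measurable_id.sub hΔmeas).norm.pow measurable_const).ennreal_ofReal
          have hmap := lintegral_map (μ := π) hwmeas measurable_fst
          rw [hπ1] at hmap
          rw [← hmap]
          exact hC2
        calc ∫⁻ a, ENNReal.ofReal (‖(T a).1 - (T a).2‖ ^ ρ) ∂π
            ≤ ∫⁻ a, ((u + v) a) ^ ρ ∂π := lintegral_mono hpt
          _ = ((∫⁻ a, ((u + v) a) ^ ρ ∂π) ^ (1/ρ)) ^ ρ := by
              rw [← ENNReal.rpow_mul, one_div_mul_cancel hρ0.ne', ENNReal.rpow_one]
          _ ≤ ((∫⁻ a, u a ^ ρ ∂π) ^ (1/ρ) + (∫⁻ a, v a ^ ρ ∂π) ^ (1/ρ)) ^ ρ :=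
              ENNReal.rpow_le_rpow hmink hρ0.le
          _ ≤ (ENNReal.ofReal (θ ^ ρ + ε) ^ (1/ρ) + ENNReal.ofReal S ^ (1/ρ)) ^ ρ := by
              refine ENNReal.rpow_le_rpow (add_le_add
                (ENNReal.rpow_le_rpow hcu (by positivity)) ?_) hρ0.le
              rw [hcv]
          _ = ENNReal.ofReal (((θ ^ ρ + ε) ^ (1/ρ) + θd) ^ ρ) := by
              rw [ENNReal.ofReal_rpow_of_nonneg hθρε (by positivity : (0:ℝ) ≤ 1/ρ),
                ENNReal.ofReal_rpow_of_nonneg hS0 (by positivity : (0:ℝ) ≤ 1/ρ),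
                ← hθd, ← ENNReal.ofReal_add (Real.rpow_nonneg hθρε _) hθd0,
                ← ENNReal.ofReal_rpow_of_nonneg
                  (by have := Real.rpow_nonneg hθρε (1/ρ); linarith) hρ0.le]
      have hcost0' : cost ρ γ₀ ≤ ENNReal.ofReal ((θ + θd) ^ ρ / (1 - t)) :=
        hcost0.trans (ENNReal.ofReal_le_ofReal hεB.le)
      have hediag : Measurable fun y : Euc d => (y, y) := measurable_id.prodMk measurable_id
      haveI : IsProbabilityMeasure ((P.map Δ).map fun y : Euc d => (y, y)) :=
        Measure.isProbabilityMeasure_map hediag.aemeasurable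
      set γ' : Measure (Euc d × Euc d) :=
        ENNReal.ofReal (1 - t) • γ₀ + ENNReal.ofReal t • ((P.map Δ).map fun y => (y, y))
        with hγ'def
      have h1t : ENNReal.ofReal (1 - t) + ENNReal.ofReal t = 1 := by
        rw [← ENNReal.ofReal_add (by linarith) ht0.le]
        norm_num
      have hγ'p : IsProbabilityMeasure γ' := by
        constructor
        rw [hγ'def]
        simp only [Measure.add_apply, Measure.smul_apply, smul_eq_mul, measure_univ, mul_one]
        exact h1t
      obtain ⟨hdmem, hdcost⟩ := diag_couplings (ρ := ρ) (P.map Δ) hρ0.ne'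
      have hγ'mem : γ' ∈ Srelax ρ (θ + θd) (P.map Δ) := by
        refine ⟨hγ'p, ?_, ?_⟩
        · rw [hγ'def, lintegral_add_measure, lintegral_smul_measure, lintegral_smul_measure]
          have hz : (∫⁻ p, ENNReal.ofReal (‖p.1 - p.2‖ ^ ρ)
              ∂((P.map Δ).map fun y => (y, y))) = 0 := hdcost
          rw [hz, smul_zero, add_zero, smul_eq_mul]
          calc ENNReal.ofReal (1 - t) * ∫⁻ p, ENNReal.ofReal (‖p.1 - p.2‖ ^ ρ) ∂γ₀
              ≤ ENNReal.ofReal (1 - t) * ENNReal.ofReal ((θ + θd) ^ ρ / (1 - t)) :=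
                mul_le_mul_right hcost0' _
            _ = ENNReal.ofReal ((θ + θd) ^ ρ) := by
                rw [← ENNReal.ofReal_mul (by linarith)]
                congr 1
                have hne : (1:ℝ) - t ≠ 0 := by intro h; rw [sub_eq_zero] at h; linarith
                field_simp
        · rw [hγ'def, Measure.map_add _ _ measurable_snd, Measure.map_smul, Measure.map_smul,
            hγ₀2, Measure.map_map measurable_snd hediag]
          have hcomp : (Prod.snd ∘ fun y : Euc d => (y, y)) = id := rfl
          rw [hcomp, Measure.map_id, ← add_smul, h1t, one_smul]
      have hf2 : Measurable fun p : Euc d × Euc d => (f p.1, f p.2) :=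
        (hf.comp measurable_fst).prodMk (hf.comp measurable_snd)
      have hIleV : I ≤ ∫⁻ p, ENNReal.ofReal (‖f p.1 - f p.2‖ ^ ρ) ∂γ₀ := by
        have hmem2 : (γ₀.map fun p : Euc d × Euc d => (f p.1, f p.2)) ∈
            Couplings (Q.map f) ((P.map Δ).map f) := by
          refine ⟨Measure.isProbabilityMeasure_map hf2.aemeasurable, ?_, ?_⟩
          · rw [Measure.map_map measurable_fst hf2]
            have hcomp : (Prod.fst ∘ fun p : Euc d × Euc d => (f p.1, f p.2)) = f ∘ Prod.fst := rfl
            rw [hcomp, ← Measure.map_map hf measurable_fst, hγ₀1]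
          · rw [Measure.map_map measurable_snd hf2]
            have hcomp : (Prod.snd ∘ fun p : Euc d × Euc d => (f p.1, f p.2)) = f ∘ Prod.snd := rfl
            rw [hcomp, ← Measure.map_map hf measurable_snd, hγ₀2]
        have hval : cost ρ (γ₀.map fun p : Euc d × Euc d => (f p.1, f p.2))
            = ∫⁻ p, ENNReal.ofReal (‖f p.1 - f p.2‖ ^ ρ) ∂γ₀ := by
          rw [cost, lintegral_map meas_costInt hf2]
        rw [hIdef]
        exact le_of_le_of_eq (iInf₂_le _ hmem2) hval
      have hfdiag : (∫⁻ p, ENNReal.ofReal (‖f p.1 - f p.2‖ ^ ρ)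
          ∂((P.map Δ).map fun y => (y, y))) = 0 := by
        rw [lintegral_map hfInt hediag]
        simp [Real.zero_rpow hρ0.ne']
      calc ENNReal.ofReal (1 - t) * I
          ≤ ENNReal.ofReal (1 - t) * ∫⁻ p, ENNReal.ofReal (‖f p.1 - f p.2‖ ^ ρ) ∂γ₀ :=
            mul_le_mul_right hIleV _
        _ ≤ ∫⁻ p, ENNReal.ofReal (‖f p.1 - f p.2‖ ^ ρ) ∂γ' := by
            rw [hγ'def, lintegral_add_measure, lintegral_smul_measure, lintegral_smul_measure,
              hfdiag, smul_zero, add_zero, smul_eq_mul]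
        _ ≤ RHS := by
            rw [hRHS]
            exact le_iSup₂_of_le γ' hγ'mem le_rfl
    refine ENNReal.le_of_forall_pos_le_add fun η hη hlt => ?_
    have hIt0 : (0:ℝ) ≤ I.toReal := ENNReal.toReal_nonneg
    have hηR : (0:ℝ) < η := hη
    set t : ℝ := min (1/2) ((η : ℝ) / (I.toReal + 1)) with htdef
    have ht0 : 0 < t := lt_min (by norm_num) (div_pos hηR (by linarith))
    have ht1 : t < 1 := lt_of_le_of_lt (min_le_left _ _) (by norm_num)
    have h2 := hmain t ht0 ht1
    have hsplit : I = ENNReal.ofReal (1 - t) * I + ENNReal.ofReal t * I := by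
      rw [← add_mul, ← ENNReal.ofReal_add (by linarith) ht0.le]
      have hone : 1 - t + t = 1 := by ring
      rw [hone, ENNReal.ofReal_one, one_mul]
    have h3 : ENNReal.ofReal t * I ≤ (η : ℝ≥0∞) := by
      have he : ENNReal.ofReal t * I = ENNReal.ofReal (t * I.toReal) := by
        rw [ENNReal.ofReal_mul ht0.le, ENNReal.ofReal_toReal hIlt.ne]
      rw [he]
      have htI : t * I.toReal ≤ (η:ℝ) := by
        have h4 : t ≤ (η:ℝ) / (I.toReal + 1) := min_le_right _ _
        have h5 : t * I.toReal ≤ ((η:ℝ) / (I.toReal + 1)) * I.toReal :=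
          mul_le_mul_of_nonneg_right h4 hIt0
        have h6 : ((η:ℝ) / (I.toReal + 1)) * I.toReal ≤ (η:ℝ) := by
          rw [div_mul_eq_mul_div, div_le_iff₀ (by linarith)]
          nlinarith
        linarith
      calc ENNReal.ofReal (t * I.toReal) ≤ ENNReal.ofReal (η:ℝ) := ENNReal.ofReal_le_ofReal htI
        _ = (η : ℝ≥0∞) := ENNReal.ofReal_coe_nnreal
    calc I = ENNReal.ofReal (1 - t) * I + ENNReal.ofReal t * I := hsplit
      _ ≤ RHS + (η:ℝ≥0∞) := add_le_add h2 h3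
end
end
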